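/- arXiv:1601.04184 — 5 statements merged into one kernel-verified Lean document; each statement's English description precedes it below -/
import Mathlib

section
/- Let Ω ⊆ D be an open set and fix a > 1, with E_n = {z ∈ ℂ : a^n ≤ log(1/|z|) ≤ a^{n+1}} \ Ω for n ≥ 1, and for ρ ≥ 1 let E^ρ = {z ∈ ℂ : 1 ≤ log(1/|z|) ≤ ρ} \ Ω (a compact subset of D). Then the series ∑_{n=1}^∞ a^{-n} C_h(E_n) diverges to +∞ if and only if the integral ∫_1^{+∞} C_h(E^ρ) ρ^{-2} dρ diverges to +∞. (Equivalence of conditions (5) and (6) of Theorem 1.1 for the Laplacian.) -/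
open MeasureTheory Filter Set
open scoped ENNReal Topology

noncomputable section

/-- The open unit disk `Σ = {z : |z| < 1}` in `ℂ`. -/
def unitDisk : Set ℂ := {z : ℂ | ‖z‖ < 1}

/-- The punctured open unit disk `D = Σ \ {0}`. -/
def puncDisk : Set ℂ := unitDisk \ {0}

/-- `h(z) = log (1/|z|)`. -/
def hker (z : ℂ) : ℝ := Real.log (1 / ‖z‖)

/-- The Green function of the Laplacian on the unit disk,
`G(z,w) = log(|1 - z·conj w| / |z - w|)`, with value `+∞` on the diagonal. -/
def greenFn (z w : ℂ) : ℝ≥0∞ :=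
  if z = w then ⊤
  else ENNReal.ofReal (Real.log (‖1 - z * (starRingEnd ℂ) w‖ / ‖z - w‖))

/-- The `h`-potential of a measure `μ`: `z ↦ ∫ G(z,w)/h(w) dμ(w)`. -/
def hPotential (μ : Measure ℂ) (z : ℂ) : ℝ≥0∞ :=
  ∫⁻ w, greenFn z w / ENNReal.ofReal (hker w) ∂μ

/-- The `h`-capacity of a set `K`: the supremum of total masses `μ(K)` over finite Borel
measures supported in `K` whose `h`-potential is dominated by `h` on `D`. -/
def capH (K : Set ℂ) : ℝ≥0∞ :=
  sSup { m : ℝ≥0∞ | ∃ μ : Measure ℂ, IsFiniteMeasure μ ∧ μ Kᶜ = 0 ∧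
    (∀ z ∈ puncDisk, hPotential μ z ≤ ENNReal.ofReal (hker z)) ∧ m = μ K }

lemma capH_mono {K K' : Set ℂ} (h : K ⊆ K') : capH K ≤ capH K' := by
  refine sSup_le ?_
  rintro m ⟨μ, hfin, hsupp, hpot, rfl⟩
  calc μ K ≤ μ K' := measure_mono h
    _ ≤ capH K' :=
      le_sSup ⟨μ, hfin, measure_mono_null (compl_subset_compl.2 h) hsupp, hpot, rfl⟩

lemma capH_union_le {K₁ K₂ : Set ℂ} (h₁ : MeasurableSet K₁) :
    capH (K₁ ∪ K₂) ≤ capH K₁ + capH K₂ := by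
  refine sSup_le ?_
  rintro m ⟨μ, hfin, hsupp, hpot, rfl⟩
  have pot : ∀ (s : Set ℂ), ∀ z ∈ puncDisk,
      hPotential (μ.restrict s) z ≤ ENNReal.ofReal (hker z) := fun s z hz =>
    le_trans (lintegral_mono' Measure.restrict_le_self le_rfl) (hpot z hz)
  have c1 : μ K₁ ≤ capH K₁ := by
    refine le_sSup ⟨μ.restrict K₁, inferInstance, ?_, pot _, ?_⟩
    · rw [Measure.restrict_apply' h₁, compl_inter_self]; exact measure_empty
    · rw [Measure.restrict_apply' h₁, inter_self]
  have c2 : μ (K₂ ∩ K₁ᶜ) ≤ capH K₂ := by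
    refine le_sSup ⟨μ.restrict K₁ᶜ, inferInstance, ?_, pot _, ?_⟩
    · rw [Measure.restrict_apply' h₁.compl, inter_comm, ← compl_union]; exact hsupp
    · rw [Measure.restrict_apply' h₁.compl]
  calc μ (K₁ ∪ K₂) ≤ μ (K₁ ∪ (K₂ ∩ K₁ᶜ)) := by
        refine measure_mono fun x hx => ?_
        by_cases hx1 : x ∈ K₁
        · exact Or.inl hx1
        · exact Or.inr ⟨hx.resolve_left hx1, hx1⟩
    _ ≤ μ K₁ + μ (K₂ ∩ K₁ᶜ) := measure_union_le _ _
    _ ≤ capH K₁ + capH K₂ := add_le_add c1 c2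


lemma abs_le_half_of_one_le_hker {w : ℂ} (hw : 1 ≤ hker w) : ‖w‖ ≤ 1/2 := by
  have h0 : ‖w‖ ≠ 0 := by
    intro h
    rw [hker, h] at hw
    simp at hw
    linarith
  have hpos : 0 < ‖w‖ := (norm_nonneg w).lt_of_ne (Ne.symm h0)
  have h2 : Real.exp 1 ≤ 1 / ‖w‖ := by
    rw [hker, Real.le_log_iff_exp_le (one_div_pos.2 hpos)] at hw
    exact hw
  have he : (2:ℝ) ≤ Real.exp 1 := by
    have := Real.add_one_le_exp 1
    linarith
  have : (2:ℝ) ≤ 1 / ‖w‖ := le_trans he h2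
  rw [le_div_iff₀ hpos] at this
  linarith

-- the Green function lower bound at z = 1/2
lemma green_lower {w : ℂ} (hw : 1 ≤ hker w) {a : ℝ} (ha : 1 < a) (hwa : hker w ≤ a) :
    ENNReal.ofReal (Real.log (9/8) / a) ≤ greenFn (1/2 : ℂ) w / ENNReal.ofReal (hker w) := by
  have ha0 : (0:ℝ) < a := lt_trans one_pos ha
  have habs : ‖w‖ ≤ 1/2 := abs_le_half_of_one_le_hker hw
  by_cases hzw : (1/2 : ℂ) = w
  · rw [greenFn, if_pos hzw, ENNReal.top_div_of_ne_top ENNReal.ofReal_ne_top]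
    exact le_top
  · rw [greenFn, if_neg hzw]
    have hB : 0 < ‖(1/2:ℂ) - w‖ := by
      rw [norm_pos_iff]
      exact sub_ne_zero.2 hzw
    -- squared norm facts
    have hw2 : w.re^2 + w.im^2 ≤ 1/4 := by
      have := Complex.sq_norm w
      rw [Complex.normSq_apply] at this
      nlinarith [habs, norm_nonneg w]
    have hxlb : -(1/2 : ℝ) ≤ w.re := by nlinarith [sq_nonneg (w.re + 1/2)]
    have hA2 : (‖1 - (1/2:ℂ) * (starRingEnd ℂ) w‖)^2
        = (1 - w.re/2)^2 + (w.im/2)^2 := by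
      rw [Complex.sq_norm, Complex.normSq_apply]
      simp [Complex.mul_re, Complex.mul_im]
      ring
    have hB2 : (‖(1/2:ℂ) - w‖)^2 = (1/2 - w.re)^2 + w.im^2 := by
      rw [Complex.sq_norm, Complex.normSq_apply]
      simp
      ring
    have hAB : 9/8 * ‖(1/2:ℂ) - w‖ ≤ ‖1 - (1/2:ℂ) * (starRingEnd ℂ) w‖ := by
      nlinarith [hA2, hB2, hB, norm_nonneg (1 - (1/2:ℂ) * (starRingEnd ℂ) w), hw2, hxlb]
    have hlog : Real.log (9/8) ≤
        Real.log (‖1 - (1/2:ℂ) * (starRingEnd ℂ) w‖ / ‖(1/2:ℂ) - w‖) := by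
      apply Real.log_le_log (by norm_num)
      rw [le_div_iff₀ hB]
      linarith
    calc ENNReal.ofReal (Real.log (9/8) / a)
        ≤ ENNReal.ofReal (Real.log (‖1 - (1/2:ℂ) * (starRingEnd ℂ) w‖
            / ‖(1/2:ℂ) - w‖) / a) := by
          exact ENNReal.ofReal_le_ofReal (by gcongr)
      _ = ENNReal.ofReal (Real.log (‖1 - (1/2:ℂ) * (starRingEnd ℂ) w‖
            / ‖(1/2:ℂ) - w‖)) / ENNReal.ofReal a := ENNReal.ofReal_div_of_pos ha0
      _ ≤ _ := ENNReal.div_le_div le_rfl (ENNReal.ofReal_le_ofReal hwa)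

lemma half_mem_puncDisk : (1/2 : ℂ) ∈ puncDisk := by
  constructor
  · show ‖(1/2 : ℂ)‖ < 1
    rw [norm_div, norm_one, Complex.norm_two]
    norm_num
  · simp

lemma hker_half : hker (1/2 : ℂ) = Real.log 2 := by
  rw [hker, norm_div, norm_one, Complex.norm_two]
  norm_num

lemma capH_shell_ne_top {a : ℝ} (ha : 1 < a) {K : Set ℂ}
    (hK : ∀ z ∈ K, 1 ≤ hker z ∧ hker z ≤ a) : capH K ≠ ⊤ := by
  have ha0 : (0:ℝ) < a := lt_trans one_pos ha
  have hc0 : (0:ℝ) < Real.log (9/8) / a := by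
    apply div_pos (Real.log_pos (by norm_num)) ha0
  set c : ℝ≥0∞ := ENNReal.ofReal (Real.log (9/8) / a) with hc
  have hcne0 : c ≠ 0 := by
    simp [hc, ENNReal.ofReal_eq_zero, not_le, hc0]
  have hbound : capH K ≤ ENNReal.ofReal (Real.log 2) / c := by
    refine sSup_le ?_
    rintro m ⟨μ, hfin, hsupp, hpot, rfl⟩
    have hae : ∀ᵐ w ∂μ, w ∈ K := by
      rw [ae_iff]
      exact hsupp
    have hlow : c * μ K ≤ hPotential μ (1/2 : ℂ) := by
      calc c * μ K ≤ c * μ univ := by gcongr; exact subset_univ K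
        _ = ∫⁻ _, c ∂μ := (lintegral_const c).symm
        _ ≤ hPotential μ (1/2 : ℂ) := by
            refine lintegral_mono_ae ?_
            filter_upwards [hae] with w hw
            exact green_lower (hK w hw).1 ha (hK w hw).2
    have hup : hPotential μ (1/2 : ℂ) ≤ ENNReal.ofReal (Real.log 2) := by
      have := hpot _ half_mem_puncDisk
      rwa [hker_half] at this
    rw [ENNReal.le_div_iff_mul_le (Or.inl hcne0) (Or.inl ENNReal.ofReal_ne_top)]
    rw [mul_comm]
    exact le_trans hlow hup
  exact ne_top_of_le_ne_top (ENNReal.div_lt_top ENNReal.ofReal_ne_top hcne0).ne hbound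

lemma setLIntegral_Ico_upper {f : ℝ → ℝ≥0∞} (hf : Monotone f) {x y : ℝ} (hx : 0 < x)
    (hxy : x ≤ y) :
    ∫⁻ ρ in Set.Ico x y, f ρ / ENNReal.ofReal (ρ^2) ≤ f y * ENNReal.ofReal ((y - x) / x^2) := by
  calc ∫⁻ ρ in Set.Ico x y, f ρ / ENNReal.ofReal (ρ^2)
      ≤ ∫⁻ _ in Set.Ico x y, f y / ENNReal.ofReal (x^2) := by
        refine setLIntegral_mono' measurableSet_Ico fun ρ hρ => ?_
        exact ENNReal.div_le_div (hf hρ.2.le)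
          (ENNReal.ofReal_le_ofReal (by nlinarith [hρ.1]))
    _ = f y / ENNReal.ofReal (x^2) * ENNReal.ofReal (y - x) := by
        rw [setLIntegral_const, Real.volume_Ico]
    _ = f y * ENNReal.ofReal ((y - x) / x^2) := by
        rw [ENNReal.ofReal_div_of_pos (by positivity), div_eq_mul_inv, div_eq_mul_inv]
        ring

lemma setLIntegral_Ico_lower {f : ℝ → ℝ≥0∞} (hf : Monotone f) {x y : ℝ} (hx : 0 < x)
    (hxy : x ≤ y) :
    f x * ENNReal.ofReal ((y - x) / y^2) ≤ ∫⁻ ρ in Set.Ico x y, f ρ / ENNReal.ofReal (ρ^2) := by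
  calc f x * ENNReal.ofReal ((y - x) / y^2)
      = f x / ENNReal.ofReal (y^2) * ENNReal.ofReal (y - x) := by
        rw [ENNReal.ofReal_div_of_pos (by nlinarith), div_eq_mul_inv, div_eq_mul_inv]
        ring
    _ = ∫⁻ _ in Set.Ico x y, f x / ENNReal.ofReal (y^2) := by
        rw [setLIntegral_const, Real.volume_Ico]
    _ ≤ _ := by
        refine setLIntegral_mono' measurableSet_Ico fun ρ hρ => ?_
        exact ENNReal.div_le_div (hf hρ.1)
          (ENNReal.ofReal_le_ofReal (by nlinarith [hρ.1, hρ.2.le]))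

lemma lintegral_Ioi_one_eq_tsum (f : ℝ → ℝ≥0∞) {a : ℝ} (ha : 1 < a) :
    ∫⁻ ρ in Set.Ioi (1:ℝ), f ρ = ∑' n : ℕ, ∫⁻ ρ in Set.Ico (a^n) (a^(n+1)), f ρ := by
  have h0 : (0:ℝ) < a := lt_trans one_pos ha
  have hcover : Set.Ici (1:ℝ) = ⋃ n : ℕ, Set.Ico (a^n) (a^(n+1)) := by
    ext x
    simp only [Set.mem_Ici, Set.mem_iUnion, Set.mem_Ico]
    constructor
    · intro hx
      exact exists_nat_pow_near hx ha
    · rintro ⟨n, h1, _⟩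
      exact le_trans (one_le_pow₀ ha.le) h1
  have hdisj : Pairwise (Function.onFun Disjoint fun n : ℕ => Set.Ico (a^n) (a^(n+1))) := by
    have key : ∀ i j : ℕ, i < j →
        Disjoint (Set.Ico (a^i) (a^(i+1))) (Set.Ico (a^j) (a^(j+1))) := by
      intro i j hij
      refine Set.disjoint_left.2 fun x hx1 hx2 => ?_
      have : a^(i+1) ≤ a^j := pow_le_pow_right₀ ha.le hij
      exact absurd (lt_of_lt_of_le hx1.2 (le_trans this hx2.1)) (lt_irrefl x)
    intro i j hij
    rcases hij.lt_or_gt with h | h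
    · exact key i j h
    · exact (key j i h).symm
  rw [Measure.restrict_congr_set Ioi_ae_eq_Ici, hcover,
    lintegral_iUnion (fun n => measurableSet_Ico) hdisj]

set_option maxHeartbeats 1000000 in
/-- Equivalence of conditions (5) and (6) of Theorem 1.1: the Wiener series diverges iff the
Wiener integral diverges. -/
theorem wiener_series_diverges_iff_wiener_integral_diverges
    (Ω : Set ℂ) (hΩD : Ω ⊆ puncDisk) (hΩopen : IsOpen Ω)
    (a : ℝ) (ha : 1 < a) (E : ℕ → Set ℂ)
    (hEdef : ∀ n : ℕ, E n =
      {z : ℂ | a ^ n ≤ Real.log (1 / ‖z‖) ∧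
        Real.log (1 / ‖z‖) ≤ a ^ (n + 1)} \ Ω)
    (Erho : ℝ → Set ℂ)
    (hErho : ∀ ρ : ℝ, Erho ρ =
      {z : ℂ | 1 ≤ Real.log (1 / ‖z‖) ∧ Real.log (1 / ‖z‖) ≤ ρ} \ Ω) :
    (∑' n : ℕ, ENNReal.ofReal (a ^ (-(n + 1 : ℝ))) * capH (E (n + 1)) = ⊤) ↔
      (∫⁻ ρ in Set.Ioi (1 : ℝ), capH (Erho ρ) / ENNReal.ofReal (ρ ^ 2) = ⊤) := by
  have ha0 : (0:ℝ) < a := lt_trans one_pos ha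
  set r : ℝ≥0∞ := ENNReal.ofReal a⁻¹ with hrdef
  set c : ℝ≥0∞ := ENNReal.ofReal (a - 1) with hcdef
  have hrlt1 : r < 1 := by
    rw [hrdef, ← ENNReal.ofReal_one]
    exact (ENNReal.ofReal_lt_ofReal_iff one_pos).2 (inv_lt_one_of_one_lt₀ ha)
  have hr0 : r ≠ 0 := by
    rw [hrdef]
    simp only [ne_eq, ENNReal.ofReal_eq_zero, not_le]
    positivity
  have hc0 : c ≠ 0 := by
    rw [hcdef]
    simp only [ne_eq, ENNReal.ofReal_eq_zero, not_le]
    linarith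
  have hβ : (1 - r)⁻¹ ≠ ⊤ := by
    rw [ne_eq, ENNReal.inv_eq_top, tsub_eq_zero_iff_le]
    exact not_le.2 hrlt1
  have hr : ∀ n : ℕ, ENNReal.ofReal (a ^ (-(n + 1 : ℝ))) = r ^ (n + 1) := by
    intro n
    have h1 : a ^ (-(n + 1 : ℝ)) = (a⁻¹) ^ (n + 1) := by
      rw [show (-((n : ℝ) + 1)) = -(((n + 1 : ℕ) : ℝ)) by push_cast; ring,
        Real.rpow_neg ha0.le, Real.rpow_natCast, ← inv_pow]
    rw [h1, hrdef, ← ENNReal.ofReal_pow (by positivity)]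
  have heq : (∑' n : ℕ, ENNReal.ofReal (a ^ (-(n + 1 : ℝ))) * capH (E (n + 1)))
      = ∑' n : ℕ, r ^ (n + 1) * capH (E (n + 1)) :=
    tsum_congr fun n => by rw [hr n]
  have hfmono : Monotone fun ρ => capH (Erho ρ) := by
    intro ρ₁ ρ₂ h
    apply capH_mono
    rw [hErho, hErho]
    exact diff_subset_diff_left fun z hz => ⟨hz.1, hz.2.trans h⟩
  have hmeas : ∀ ρ : ℝ, MeasurableSet (Erho ρ) := by
    intro ρ
    rw [hErho]
    have hhm : Measurable fun z : ℂ => Real.log (1 / ‖z‖) := by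
      apply Real.measurable_log.comp
      simp_rw [one_div]
      exact continuous_norm.measurable.inv
    exact (hhm measurableSet_Icc).diff hΩopen.measurableSet
  -- constants
  have hconst_up : ∀ n : ℕ, ENNReal.ofReal ((a ^ (n + 1) - a ^ n) / (a ^ n) ^ 2)
      = c * r ^ n := by
    intro n
    have hne : a ^ n ≠ 0 := by positivity
    have h1 : (a ^ (n + 1) - a ^ n) / (a ^ n) ^ 2 = (a - 1) * (a⁻¹) ^ n := by
      rw [inv_pow]
      field_simp
      ring
    rw [h1, ENNReal.ofReal_mul (by linarith), hcdef, hrdef,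
      ← ENNReal.ofReal_pow (by positivity)]
  have hconst_lo : ∀ n : ℕ, ENNReal.ofReal ((a ^ (n + 1) - a ^ n) / (a ^ (n + 1)) ^ 2)
      = c * r ^ (n + 2) := by
    intro n
    have hne : a ^ (n + 1) ≠ 0 := by positivity
    have h1 : (a ^ (n + 1) - a ^ n) / (a ^ (n + 1)) ^ 2 = (a - 1) * (a⁻¹) ^ (n + 2) := by
      rw [inv_pow]
      field_simp
      ring
    rw [h1, ENNReal.ofReal_mul (by linarith), hcdef, hrdef,
      ← ENNReal.ofReal_pow (by positivity)]
  have hIdecomp : (∫⁻ ρ in Set.Ioi (1 : ℝ), capH (Erho ρ) / ENNReal.ofReal (ρ ^ 2))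
      = ∑' n : ℕ, ∫⁻ ρ in Set.Ico (a ^ n) (a ^ (n + 1)), capH (Erho ρ) / ENNReal.ofReal (ρ ^ 2) :=
    lintegral_Ioi_one_eq_tsum _ ha
  have hupper : (∫⁻ ρ in Set.Ioi (1 : ℝ), capH (Erho ρ) / ENNReal.ofReal (ρ ^ 2))
      ≤ ∑' n : ℕ, capH (Erho (a ^ (n + 1))) * (c * r ^ n) := by
    rw [hIdecomp]
    refine ENNReal.tsum_le_tsum fun n => ?_
    have h := setLIntegral_Ico_upper hfmono (pow_pos ha0 n)
      (pow_le_pow_right₀ ha.le (Nat.le_succ n))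
    rw [hconst_up n] at h
    exact h
  have hlower : (∑' n : ℕ, capH (Erho (a ^ n)) * (c * r ^ (n + 2)))
      ≤ ∫⁻ ρ in Set.Ioi (1 : ℝ), capH (Erho ρ) / ENNReal.ofReal (ρ ^ 2) := by
    rw [hIdecomp]
    refine ENNReal.tsum_le_tsum fun n => ?_
    have h := setLIntegral_Ico_lower hfmono (pow_pos ha0 n)
      (pow_le_pow_right₀ ha.le (Nat.le_succ n))
    rw [hconst_lo n] at h
    exact h
  have hE_sub : ∀ n : ℕ, E (n + 1) ⊆ Erho (a ^ (n + 2)) := by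
    intro n
    rw [hEdef, hErho]
    exact diff_subset_diff_left fun z hz =>
      ⟨le_trans (one_le_pow₀ ha.le) hz.1, hz.2⟩
  constructor
  · -- series diverges → integral diverges
    intro hS
    have hS' : ∑' n : ℕ, r ^ (n + 1) * capH (E (n + 1)) = ⊤ := heq ▸ hS
    have step1 : (∑' n : ℕ, r ^ (n + 1) * capH (E (n + 1)))
        ≤ ∑' n : ℕ, r ^ (n + 1) * capH (Erho (a ^ (n + 2))) :=
      ENNReal.tsum_le_tsum fun n => mul_le_mul_right (capH_mono (hE_sub n)) _
    have hmid : (∑' n : ℕ, r ^ (n + 1) * capH (Erho (a ^ (n + 2)))) = ⊤ :=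
      top_le_iff.1 (hS' ▸ step1)
    have hkey : (c * r ^ 3) * (∑' n : ℕ, r ^ (n + 1) * capH (Erho (a ^ (n + 2))))
        ≤ ∫⁻ ρ in Set.Ioi (1 : ℝ), capH (Erho ρ) / ENNReal.ofReal (ρ ^ 2) := by
      rw [← ENNReal.tsum_mul_left]
      calc (∑' n : ℕ, (c * r ^ 3) * (r ^ (n + 1) * capH (Erho (a ^ (n + 2)))))
          = ∑' n : ℕ, capH (Erho (a ^ (n + 2))) * (c * r ^ (n + 2 + 2)) :=
            tsum_congr fun n => by ring
        _ ≤ ∑' n : ℕ, capH (Erho (a ^ n)) * (c * r ^ (n + 2)) := by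
            have h := ENNReal.tsum_comp_le_tsum_of_injective (add_left_injective 2)
              (fun n : ℕ => capH (Erho (a ^ n)) * (c * r ^ (n + 2)))
            simpa [Function.comp] using h
        _ ≤ _ := hlower
    rw [hmid, ENNReal.mul_top (mul_ne_zero hc0 (pow_ne_zero 3 hr0))] at hkey
    exact top_le_iff.1 hkey
  · -- integral diverges → series diverges
    intro hInt
    by_contra hS
    have hS' : (∑' n : ℕ, r ^ (n + 1) * capH (E (n + 1))) ≠ ⊤ := fun h => hS (heq ▸ h)
    have hF : capH (Erho a) ≠ ⊤ := by
      refine capH_shell_ne_top ha ?_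
      rw [hErho a]
      rintro z ⟨⟨u, v⟩, -⟩
      exact ⟨u, v⟩
    have hchain : ∀ n : ℕ, capH (Erho (a ^ (n + 1)))
        ≤ capH (Erho a) + ∑ k ∈ Finset.range n, capH (E (k + 1)) := by
      intro n
      induction n with
      | zero => simp [pow_one]
      | succ n ih =>
        have hstep : Erho (a ^ (n + 2)) ⊆ Erho (a ^ (n + 1)) ∪ E (n + 1) := by
          rw [hErho, hErho, hEdef]
          intro z hz
          rcases le_or_gt (Real.log (1 / ‖z‖)) (a ^ (n + 1)) with h | h
          · exact Or.inl ⟨⟨hz.1.1, h⟩, hz.2⟩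
          · exact Or.inr ⟨⟨h.le, hz.1.2⟩, hz.2⟩
        calc capH (Erho (a ^ (n + 2)))
            ≤ capH (Erho (a ^ (n + 1)) ∪ E (n + 1)) := capH_mono hstep
          _ ≤ capH (Erho (a ^ (n + 1))) + capH (E (n + 1)) := capH_union_le (hmeas _)
          _ ≤ (capH (Erho a) + ∑ k ∈ Finset.range n, capH (E (k + 1))) + capH (E (n + 1)) :=
              add_le_add ih le_rfl
          _ = capH (Erho a) + ∑ k ∈ Finset.range (n + 1), capH (E (k + 1)) := by
              rw [Finset.sum_range_succ, add_assoc]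
    have hIle : (∫⁻ ρ in Set.Ioi (1 : ℝ), capH (Erho ρ) / ENNReal.ofReal (ρ ^ 2))
        ≤ ∑' n : ℕ, (capH (Erho a) + ∑ k ∈ Finset.range n, capH (E (k + 1))) * (c * r ^ n) :=
      le_trans hupper (ENNReal.tsum_le_tsum fun n => mul_le_mul_left (hchain n) _)
    have hsplit : (∑' n : ℕ, (capH (Erho a) + ∑ k ∈ Finset.range n, capH (E (k + 1)))
          * (c * r ^ n))
        = (∑' n : ℕ, capH (Erho a) * (c * r ^ n))
          + ∑' n : ℕ, (∑ k ∈ Finset.range n, capH (E (k + 1))) * (c * r ^ n) := by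
      rw [← ENNReal.tsum_add]
      exact tsum_congr fun n => add_mul _ _ _
    have hT1 : (∑' n : ℕ, capH (Erho a) * (c * r ^ n)) = (capH (Erho a) * c) * (1 - r)⁻¹ := by
      calc (∑' n : ℕ, capH (Erho a) * (c * r ^ n))
          = ∑' n : ℕ, (capH (Erho a) * c) * r ^ n := tsum_congr fun n => by ring
        _ = (capH (Erho a) * c) * ∑' n : ℕ, r ^ n := ENNReal.tsum_mul_left
        _ = (capH (Erho a) * c) * (1 - r)⁻¹ := by rw [ENNReal.tsum_geometric]
    have hT2 : (∑' n : ℕ, (∑ k ∈ Finset.range n, capH (E (k + 1))) * (c * r ^ n))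
        = (c * (1 - r)⁻¹) * ∑' k : ℕ, r ^ (k + 1) * capH (E (k + 1)) := by
      calc (∑' n : ℕ, (∑ k ∈ Finset.range n, capH (E (k + 1))) * (c * r ^ n))
          = ∑' n : ℕ, ∑' k : ℕ, (if k < n then capH (E (k + 1)) * (c * r ^ n) else 0) := by
            refine tsum_congr fun n => ?_
            rw [Finset.sum_mul,
              tsum_eq_sum (s := Finset.range n) (fun k hk => if_neg (by simpa using hk))]
            exact Finset.sum_congr rfl fun k hk => (if_pos (Finset.mem_range.1 hk)).symm
        _ = ∑' k : ℕ, ∑' n : ℕ, (if k < n then capH (E (k + 1)) * (c * r ^ n) else 0) :=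
            ENNReal.tsum_comm
        _ = ∑' k : ℕ, (c * (1 - r)⁻¹) * (r ^ (k + 1) * capH (E (k + 1))) := by
            refine tsum_congr fun k => ?_
            have hshift : (∑' n : ℕ, if k < n then capH (E (k + 1)) * (c * r ^ n) else 0)
                = ∑' m : ℕ, (if k < m + (k + 1) then capH (E (k + 1)) * (c * r ^ (m + (k + 1))) else 0) := by
              refine (Function.Injective.tsum_eq
                (f := fun n : ℕ => if k < n then capH (E (k + 1)) * (c * r ^ n) else 0)
                (fun m n h => by simpa using h : Function.Injective fun m : ℕ => m + (k + 1)) ?_).symm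
              intro n hn
              simp only [Function.mem_support, ne_eq, ite_eq_right_iff, not_forall] at hn
              obtain ⟨hkn, -⟩ := hn
              exact ⟨n - (k + 1), show n - (k + 1) + (k + 1) = n by omega⟩
            rw [hshift]
            calc (∑' m : ℕ, if k < m + (k + 1) then capH (E (k + 1)) * (c * r ^ (m + (k + 1))) else 0)
                = ∑' m : ℕ, (capH (E (k + 1)) * (c * r ^ (k + 1))) * r ^ m := by
                  refine tsum_congr fun m => ?_
                  rw [if_pos (by omega), pow_add]
                  ring
              _ = (capH (E (k + 1)) * (c * r ^ (k + 1))) * (1 - r)⁻¹ := by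
                  rw [ENNReal.tsum_mul_left, ENNReal.tsum_geometric]
              _ = (c * (1 - r)⁻¹) * (r ^ (k + 1) * capH (E (k + 1))) := by ring
        _ = (c * (1 - r)⁻¹) * ∑' k : ℕ, r ^ (k + 1) * capH (E (k + 1)) :=
            ENNReal.tsum_mul_left
    have hfin : (∑' n : ℕ, (capH (Erho a) + ∑ k ∈ Finset.range n, capH (E (k + 1)))
          * (c * r ^ n)) ≠ ⊤ := by
      rw [hsplit, hT1, hT2]
      exact ENNReal.add_ne_top.2
        ⟨ENNReal.mul_ne_top (ENNReal.mul_ne_top hF ENNReal.ofReal_ne_top) hβ,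
         ENNReal.mul_ne_top (ENNReal.mul_ne_top ENNReal.ofReal_ne_top hβ) hS'⟩
    exact hfin (top_le_iff.1 (hInt ▸ hIle))


end
end

section
/- Let Ω ⊆ D be an open set and fix a > 1, with E_n = {z ∈ ℂ : a^n ≤ log(1/|z|) ≤ a^{n+1}} \ Ω for n ≥ 1. Then the series ∑_{n=1}^∞ a^{-n} C_h(E_n) converges if and only if the series ∑_{n=1}^∞ a^{n} C_g(E_n) converges. (Equivalence of conditions (5) and (8) of Theorem 1.1 for the Laplacian: the h-capacity Wiener series and the classical Greenian-capacity Wiener series converge or diverge together.) -/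
open MeasureTheory Filter Set
open scoped ENNReal Topology

noncomputable section

/-- The Greenian potential of a measure: `z ↦ ∫ G(z,w) dμ(w)`. -/
def gPotential (μ : Measure ℂ) (z : ℂ) : ℝ≥0∞ :=
  ∫⁻ w, greenFn z w ∂μ

/-- The Greenian capacity of a set `K ⊆ Σ`: the supremum of total masses `μ(K)` over finite
Borel measures supported in `K` whose Greenian potential is dominated by `1` on `Σ`. -/
def capG (K : Set ℂ) : ℝ≥0∞ :=
  sSup { m : ℝ≥0∞ | ∃ μ : Measure ℂ, IsFiniteMeasure μ ∧ μ Kᶜ = 0 ∧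
    (∀ z ∈ unitDisk, gPotential μ z ≤ 1) ∧ m = μ K }

private lemma sq_ident (z w : ℂ) : (‖1 - z * (starRingEnd ℂ) w‖)^2
    = (‖z - w‖)^2 + (1 - (‖z‖)^2) * (1 - (‖w‖)^2) := by
  rw [Complex.sq_norm, Complex.sq_norm, Complex.sq_norm, Complex.sq_norm]
  simp [Complex.normSq_apply, Complex.sub_re, Complex.sub_im, Complex.mul_re, Complex.mul_im,
    Complex.conj_re, Complex.conj_im]
  ring

private lemma absA_le (z w : ℂ) :
    ‖1 - z * (starRingEnd ℂ) w‖ ≤ 1 + ‖z‖ * ‖w‖ := by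
  calc ‖1 - z * (starRingEnd ℂ) w‖ ≤
      ‖(1:ℂ)‖ + ‖z * (starRingEnd ℂ) w‖ := by
        simpa using norm_sub_le 1 (z * (starRingEnd ℂ) w)
  _ = 1 + ‖z‖ * ‖w‖ := by simp [map_mul]

private lemma absA_ge (z w : ℂ) :
    1 - ‖z‖ * ‖w‖ ≤ ‖1 - z * (starRingEnd ℂ) w‖ := by
  have := norm_sub_norm_le (1 : ℂ) (z * (starRingEnd ℂ) w)
  simpa [map_mul] using this

private lemma absB_ge (z w : ℂ) :
    ‖w‖ - ‖z‖ ≤ ‖z - w‖ := by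
  have := norm_sub_norm_le w z
  simpa [norm_sub_rev, AbsoluteValue.map_sub] using this

private lemma absB_ge' (z w : ℂ) :
    ‖z‖ - ‖w‖ ≤ ‖z - w‖ := by
  simpa using norm_sub_norm_le z w

private lemma absB_le (z w : ℂ) :
    ‖z - w‖ ≤ ‖z‖ + ‖w‖ := by
  simpa using norm_sub_le z w

-- numeric exp facts
private lemma exp_neg_one_lt : Real.exp (-1) < 1/2 := by
  rw [Real.exp_neg]
  rw [inv_lt_comm₀ (Real.exp_pos 1) (by norm_num)]
  calc (1/2:ℝ)⁻¹ = 2 := by norm_num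
  _ < Real.exp 1 := by nlinarith [Real.exp_one_gt_d9]

private lemma exp_neg_one_le' : Real.exp (-1) ≤ 2/5 := by
  rw [Real.exp_neg]
  rw [inv_le_comm₀ (Real.exp_pos 1) (by norm_num)]
  nlinarith [Real.exp_one_gt_d9]

-- lemA : hole upper bound
private lemma lemA (z w : ℂ) (hw0 : 0 < ‖w‖) (hw1 : ‖w‖ ≤ Real.exp (-1))
    (hz : ‖z‖ ≤ ‖w‖ / 2) :
    Real.log (‖1 - z * (starRingEnd ℂ) w‖ / ‖z - w‖)
      ≤ Real.log (1 / ‖w‖) + 2 * Real.log 2 := by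
  have hB : ‖w‖ / 2 ≤ ‖z - w‖ := by
    have := absB_ge z w; linarith
  have hB0 : (0:ℝ) < ‖w‖ / 2 := by linarith
  have hA : ‖1 - z * (starRingEnd ℂ) w‖ ≤ 2 := by
    have h1 := absA_le z w
    have : ‖z‖ * ‖w‖ ≤ 1 := by nlinarith [exp_neg_one_lt, Real.exp_pos (-1)]
    linarith
  have hr : ‖1 - z * (starRingEnd ℂ) w‖ / ‖z - w‖
      ≤ 2 / (‖w‖ / 2) :=
    div_le_div₀ (by norm_num) hA hB0 hB
  calc Real.log (‖1 - z * (starRingEnd ℂ) w‖ / ‖z - w‖)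
      ≤ Real.log (2 / (‖w‖ / 2)) := by
        rcases eq_or_lt_of_le (norm_nonneg (1 - z * (starRingEnd ℂ) w)) with h|h
        · rw [← h]
          simp only [zero_div, Real.log_zero]
          apply Real.log_nonneg
          rw [le_div_iff₀ hB0]; nlinarith [exp_neg_one_lt, Real.exp_pos (-1)]
        · exact Real.log_le_log (div_pos h (lt_of_lt_of_le hB0 hB)) hr
  _ = Real.log 2 - (Real.log (‖w‖) - Real.log 2) := by
        rw [Real.log_div (by norm_num) (ne_of_gt hB0), Real.log_div (ne_of_gt hw0) (by norm_num)]
  _ = Real.log (1 / ‖w‖) + 2 * Real.log 2 := by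
        rw [one_div, Real.log_inv]; ring

-- lemB : lower bound at the test point deep in the hole
private lemma lemB (z w : ℂ) (hw0 : 0 < ‖w‖) (hw1 : ‖w‖ ≤ Real.exp (-1))
    (hz : ‖z‖ ≤ ‖w‖ * Real.exp (-1)) :
    Real.log (1 / ‖w‖) - 1/2
      ≤ Real.log (‖1 - z * (starRingEnd ℂ) w‖ / ‖z - w‖) := by
  have he : Real.exp (-1) ≤ 2/5 := exp_neg_one_le'
  have he0 : (0:ℝ) < Real.exp (-1) := Real.exp_pos _
  have hw25 : ‖w‖ ≤ 2/5 := le_trans hw1 he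
  have hz25 : ‖z‖ ≤ (2/5) * ‖w‖ := by nlinarith
  have hA : (117/125 : ℝ) ≤ ‖1 - z * (starRingEnd ℂ) w‖ := by
    have h1 := absA_ge z w
    have : ‖z‖ * ‖w‖ ≤ 8/125 := by nlinarith [norm_nonneg z, hw0]
    linarith
  have hB0 : (0:ℝ) < ‖z - w‖ := by
    have := absB_ge z w; nlinarith
  have hB : ‖z - w‖ ≤ (7/5) * ‖w‖ := by
    have := absB_le z w; linarith
  have hlogA : Real.log (117/125 : ℝ) ≤ Real.log (‖1 - z * (starRingEnd ℂ) w‖) :=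
    Real.log_le_log (by norm_num) hA
  have hlogB : Real.log (‖z - w‖) ≤ Real.log ((7/5) * ‖w‖) :=
    Real.log_le_log hB0 hB
  have h117 : -(1/14 : ℝ) ≤ Real.log (117/125 : ℝ) := by
    have h := Real.log_le_sub_one_of_pos (show (0:ℝ) < (117/125)⁻¹ by norm_num)
    rw [Real.log_inv] at h
    norm_num at h ⊢
    linarith
  have h75 : Real.log ((7/5):ℝ) ≤ 2/5 := by
    have h := Real.log_le_sub_one_of_pos (show (0:ℝ) < (7/5:ℝ) by norm_num)
    linarith
  rw [Real.log_div (by positivity) (ne_of_gt hB0), one_div, Real.log_inv]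
  rw [Real.log_mul (by norm_num) (ne_of_gt hw0)] at hlogB
  linarith


-- lemC : boundary upper bound, |z| ≥ 1/2
private lemma lemC (z w : ℂ) (hz1 : 1/2 ≤ ‖z‖) (hz2 : ‖z‖ < 1)
    (hw1 : ‖w‖ ≤ Real.exp (-1)) :
    Real.log (‖1 - z * (starRingEnd ℂ) w‖ / ‖z - w‖)
      ≤ 200 * hker z := by
  have hw0 := norm_nonneg w
  have he : Real.exp (-1) ≤ 2/5 := exp_neg_one_le'
  have hw25 : ‖w‖ ≤ 2/5 := le_trans hw1 he
  have hB : (1/10 : ℝ) ≤ ‖z - w‖ := by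
    have := absB_ge' z w; linarith
  have hB0 : (0:ℝ) < ‖z - w‖ := by linarith
  set A := ‖1 - z * (starRingEnd ℂ) w‖ with hAdef
  set B := ‖z - w‖ with hBdef
  have hid : A^2 = B^2 + (1 - (‖z‖)^2) * (1 - (‖w‖)^2) := sq_ident z w
  have hD0 : (0:ℝ) ≤ (1 - (‖z‖)^2) * (1 - (‖w‖)^2) :=
    mul_nonneg (by nlinarith) (by nlinarith)
  have h1z : (0:ℝ) ≤ 1 - (‖z‖)^2 := by nlinarith
  have hD1 : (1 - (‖z‖)^2) * (1 - (‖w‖)^2) ≤ 1 - (‖z‖)^2 := by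
    nlinarith [mul_nonneg h1z (sq_nonneg (‖w‖))]
  have hA0 : (0:ℝ) < A := by nlinarith [norm_nonneg (1 - z * (starRingEnd ℂ) w)]
  have hlog2 : Real.log (A/B) = (1/2) * Real.log (A^2/B^2) := by
    rw [show A^2/B^2 = (A/B)^2 from (div_pow A B 2).symm, Real.log_pow]
    push_cast; ring
  have hratio : A^2/B^2 ≤ 1 + (1 - (‖z‖)^2) / B^2 := by
    rw [hid, add_div]
    have hBB : B^2/B^2 = 1 := by field_simp
    rw [hBB]
    gcongr
  have hlogle : Real.log (A^2/B^2) ≤ (1 - (‖z‖)^2) / B^2 := by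
    calc Real.log (A^2/B^2) ≤ Real.log (1 + (1 - (‖z‖)^2) / B^2) :=
          Real.log_le_log (div_pos (pow_pos hA0 2) (pow_pos hB0 2)) hratio
    _ ≤ (1 + (1 - (‖z‖)^2) / B^2) - 1 :=
          Real.log_le_sub_one_of_pos (by positivity)
    _ = (1 - (‖z‖)^2) / B^2 := by ring
  have hzlog : 1 - ‖z‖ ≤ hker z := by
    have h := Real.log_le_sub_one_of_pos (show (0:ℝ) < ‖z‖ by linarith)
    unfold hker
    rw [one_div, Real.log_inv]
    linarith
  have hfin : (1 - (‖z‖)^2) / B^2 ≤ 400 * (1 - ‖z‖) := by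
    rw [div_le_iff₀ (by positivity)]
    have h1mz : (0:ℝ) ≤ 1 - ‖z‖ := by linarith
    have hBsq : (0:ℝ) ≤ B^2 - 1/100 := by nlinarith
    nlinarith [mul_nonneg h1mz hBsq]
  calc Real.log (A/B) = (1/2) * Real.log (A^2/B^2) := hlog2
  _ ≤ (1/2) * ((1 - (‖z‖)^2) / B^2) := by linarith
  _ ≤ 200 * (1 - ‖z‖) := by linarith
  _ ≤ 200 * hker z := by linarith

-- lemD : middle upper bound, 0 < |z| ≤ 1/2, |w| ≤ |z|^2
private lemma lemD (z w : ℂ) (hz0 : 0 < ‖z‖) (hz1 : ‖z‖ ≤ 1/2)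
    (hw : ‖w‖ ≤ (‖z‖)^2) :
    Real.log (‖1 - z * (starRingEnd ℂ) w‖ / ‖z - w‖)
      ≤ 200 * hker z := by
  have hw0 := norm_nonneg w
  have hwz : ‖w‖ ≤ ‖z‖ / 2 := by nlinarith
  have hB : ‖z‖ / 2 ≤ ‖z - w‖ := by
    have := absB_ge' z w; linarith
  have hB0 : (0:ℝ) < ‖z‖ / 2 := by linarith
  have hA : ‖1 - z * (starRingEnd ℂ) w‖ ≤ 2 := by
    have h1 := absA_le z w
    nlinarith
  have hr : ‖1 - z * (starRingEnd ℂ) w‖ / ‖z - w‖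
      ≤ 2 / (‖z‖ / 2) :=
    div_le_div₀ (by norm_num) hA hB0 hB
  have hlog2z : Real.log 2 ≤ Real.log (1 / ‖z‖) := by
    rw [one_div, Real.log_inv]
    have h := Real.log_le_log hz0 hz1
    rw [show (1/2:ℝ) = 2⁻¹ by norm_num, Real.log_inv] at h
    linarith
  have hk : hker z = Real.log (1 / ‖z‖) := rfl
  have hkpos : 0 < hker z := by
    have := Real.log_pos (show (1:ℝ) < 2 by norm_num); rw [hk]; linarith
  have step : Real.log (‖1 - z * (starRingEnd ℂ) w‖ / ‖z - w‖)
      ≤ Real.log (2 / (‖z‖ / 2)) := by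
    rcases eq_or_lt_of_le (norm_nonneg (1 - z * (starRingEnd ℂ) w)) with h|h
    · rw [← h]
      simp only [zero_div, Real.log_zero]
      apply Real.log_nonneg
      rw [le_div_iff₀ hB0]; nlinarith
    · exact Real.log_le_log (div_pos h (lt_of_lt_of_le hB0 hB)) hr
  have expand : Real.log (2 / (‖z‖ / 2)) = 2 * Real.log 2 + Real.log (1 / ‖z‖) := by
    rw [Real.log_div (by norm_num) (ne_of_gt hB0), Real.log_div (ne_of_gt hz0) (by norm_num),
      one_div, Real.log_inv]
    ring
  rw [hk]
  calc Real.log (‖1 - z * (starRingEnd ℂ) w‖ / ‖z - w‖)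
      ≤ 2 * Real.log 2 + Real.log (1 / ‖z‖) := by rw [← expand]; exact step
  _ ≤ 2 * Real.log (1/‖z‖) + Real.log (1 / ‖z‖) := by linarith
  _ ≤ 200 * Real.log (1 / ‖z‖) := by
      have : (0:ℝ) ≤ Real.log (1/‖z‖) := by rw [← hk]; linarith
      linarith

-- facts about points of the annulus
private lemma annW {a : ℝ} (ha : 1 < a) {m : ℕ} {w : ℂ}
    (h1 : a ^ m ≤ hker w) (h2 : hker w ≤ a ^ (m+1)) :
    0 < ‖w‖ ∧ ‖w‖ ≤ Real.exp (-a^m) ∧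
      Real.exp (-(a^(m+1))) ≤ ‖w‖ ∧ ‖w‖ ≤ Real.exp (-1) := by
  have ha1m : (1:ℝ) ≤ a ^ m := one_le_pow₀ ha.le
  have hw0 : 0 < ‖w‖ := by
    rcases eq_or_lt_of_le (norm_nonneg w) with h|h
    · exfalso
      unfold hker at h1
      rw [← h] at h1
      norm_num at h1
      linarith
    · exact h
  have hlogw1 : Real.log (‖w‖) ≤ -a^m := by
    unfold hker at h1; rw [one_div, Real.log_inv] at h1; linarith
  have hlogw2 : -(a^(m+1)) ≤ Real.log (‖w‖) := by
    unfold hker at h2; rw [one_div, Real.log_inv] at h2; linarith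
  refine ⟨hw0, ?_, ?_, ?_⟩
  · calc ‖w‖ = Real.exp (Real.log (‖w‖)) := (Real.exp_log hw0).symm
    _ ≤ Real.exp (-a^m) := Real.exp_le_exp.mpr hlogw1
  · calc Real.exp (-(a^(m+1))) ≤ Real.exp (Real.log (‖w‖)) := Real.exp_le_exp.mpr hlogw2
    _ = ‖w‖ := Real.exp_log hw0
  · calc ‖w‖ = Real.exp (Real.log (‖w‖)) := (Real.exp_log hw0).symm
    _ ≤ Real.exp (-1) := Real.exp_le_exp.mpr (by linarith)

private lemma ofReal_hker_ne_zero {a : ℝ} (ha : 1 < a) {m : ℕ} {w : ℂ}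
    (h1 : a ^ m ≤ hker w) : ENNReal.ofReal (hker w) ≠ 0 := by
  have ha1m : (1:ℝ) ≤ a ^ m := one_le_pow₀ ha.le
  rw [Ne, ENNReal.ofReal_eq_zero]
  push_neg
  linarith

-- Direction 1
private lemma capH_le_capG {a : ℝ} (ha : 1 < a) {m : ℕ} {K : Set ℂ}
    (hK : ∀ w ∈ K, a ^ m ≤ hker w ∧ hker w ≤ a ^ (m + 1)) :
    capH K ≤ ENNReal.ofReal (12 * a ^ (2*m+2)) * capG K := by
  have ha0 : (0:ℝ) < a := lt_trans one_pos ha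
  have ha1m : (1:ℝ) ≤ a ^ m := one_le_pow₀ ha.le
  have ha1m1 : (1:ℝ) ≤ a ^ (m+1) := one_le_pow₀ ha.le
  apply sSup_le
  rintro x ⟨μ, hfin, hsupp, hpot, rfl⟩
  have hae : ∀ᵐ w ∂μ, w ∈ K := by rw [ae_iff]; exact hsupp
  set t : ℝ := a ^ (m+1) + 1 with ht
  have ht0 : (0:ℝ) < t := by positivity
  set z₀ : ℂ := ((Real.exp (-t) : ℝ) : ℂ) with hz₀def
  have habsz₀ : ‖z₀‖ = Real.exp (-t) := by
    rw [hz₀def, Complex.norm_real, Real.norm_eq_abs, abs_of_pos (Real.exp_pos _)]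
  have hz₀punc : z₀ ∈ puncDisk := by
    constructor
    · show ‖z₀‖ < 1
      rw [habsz₀]; exact Real.exp_lt_one_iff.mpr (by linarith)
    · simp only [Set.mem_singleton_iff]
      intro h
      rw [h] at habsz₀
      simp at habsz₀
      have := Real.exp_pos (-t)
      linarith
  have hkz₀ : hker z₀ = t := by
    unfold hker; rw [habsz₀, one_div, Real.log_inv, Real.log_exp, neg_neg]
  -- a.e. lower bound at z₀
  have haeb : ∀ᵐ w ∂μ, ENNReal.ofReal (1/2) ≤ greenFn z₀ w / ENNReal.ofReal (hker w) := by
    filter_upwards [hae] with w hw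
    obtain ⟨h1, h2⟩ := hK w hw
    obtain ⟨hw0, hwub, hwlb, hwe⟩ := annW ha h1 h2
    have hwz : ‖z₀‖ ≤ ‖w‖ * Real.exp (-1) := by
      rw [habsz₀]
      calc Real.exp (-t) = Real.exp (-(a^(m+1))) * Real.exp (-1) := by
            rw [← Real.exp_add]; congr 1; rw [ht]; ring
      _ ≤ ‖w‖ * Real.exp (-1) :=
            mul_le_mul_of_nonneg_right hwlb (Real.exp_pos _).le
    have hz₀lt : ‖z₀‖ < ‖w‖ := by
      have he1 : Real.exp (-1) < 1 := Real.exp_lt_one_iff.mpr (by norm_num)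
      calc ‖z₀‖ ≤ ‖w‖ * Real.exp (-1) := hwz
      _ < ‖w‖ * 1 := by
            exact mul_lt_mul_of_pos_left he1 hw0
      _ = ‖w‖ := mul_one _
    have hne : z₀ ≠ w := fun h => by rw [h] at hz₀lt; exact lt_irrefl _ hz₀lt
    have hglow := lemB z₀ w hw0 hwe hwz
    rw [ENNReal.le_div_iff_mul_le (Or.inl (ofReal_hker_ne_zero ha h1))
      (Or.inl ENNReal.ofReal_ne_top)]
    have hgf : greenFn z₀ w = ENNReal.ofReal
        (Real.log (‖1 - z₀ * (starRingEnd ℂ) w‖ / ‖z₀ - w‖)) := by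
      simp only [greenFn, if_neg hne]
    rw [hgf, ← ENNReal.ofReal_mul (by norm_num)]
    apply ENNReal.ofReal_le_ofReal
    have hkw1 : 1 ≤ hker w := le_trans ha1m h1
    have hkeq : Real.log (1 / ‖w‖) = hker w := rfl
    rw [hkeq] at hglow
    nlinarith
  -- mass bound
  have hmass : μ Set.univ ≤ ENNReal.ofReal (4 * a^(m+1)) := by
    have h1 : ENNReal.ofReal (1/2) * μ Set.univ ≤ ENNReal.ofReal (2 * a^(m+1)) := by
      calc ENNReal.ofReal (1/2) * μ Set.univ = ∫⁻ _, ENNReal.ofReal (1/2) ∂μ :=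
            (lintegral_const _).symm
      _ ≤ ∫⁻ w, greenFn z₀ w / ENNReal.ofReal (hker w) ∂μ := lintegral_mono_ae haeb
      _ ≤ ENNReal.ofReal (hker z₀) := hpot z₀ hz₀punc
      _ ≤ ENNReal.ofReal (2 * a^(m+1)) :=
            ENNReal.ofReal_le_ofReal (by rw [hkz₀, ht]; linarith)
    have h2 : ENNReal.ofReal 2 * ENNReal.ofReal (1/2) = 1 := by
      rw [← ENNReal.ofReal_mul (by norm_num)]; norm_num
    calc μ Set.univ = ENNReal.ofReal 2 * (ENNReal.ofReal (1/2) * μ Set.univ) := by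
          rw [← mul_assoc, h2, one_mul]
    _ ≤ ENNReal.ofReal 2 * ENNReal.ofReal (2 * a^(m+1)) := mul_le_mul_right h1 _
    _ = ENNReal.ofReal (4 * a^(m+1)) := by
          rw [← ENNReal.ofReal_mul (by norm_num)]; congr 1; ring
  -- uniform bound on the Green potential of μ
  have hgbound : ∀ z ∈ unitDisk, gPotential μ z ≤ ENNReal.ofReal (12 * a^(2*m+2)) := by
    intro z hz
    have hz1 : ‖z‖ < 1 := hz
    by_cases hcase : ‖z‖ ≤ Real.exp (-t)
    · have haeG : ∀ᵐ w ∂μ, greenFn z w ≤ ENNReal.ofReal (3 * a^(m+1)) := by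
        filter_upwards [hae] with w hw
        obtain ⟨h1, h2⟩ := hK w hw
        obtain ⟨hw0, hwub, hwlb, hwe⟩ := annW ha h1 h2
        have hhalf : Real.exp (-1) ≤ 1/2 := exp_neg_one_lt.le
        have hzw : ‖z‖ ≤ ‖w‖ / 2 := by
          calc ‖z‖ ≤ Real.exp (-t) := hcase
          _ = Real.exp (-(a^(m+1))) * Real.exp (-1) := by
                rw [← Real.exp_add]; congr 1; rw [ht]; ring
          _ ≤ ‖w‖ * (1/2) :=
                mul_le_mul hwlb hhalf (Real.exp_pos _).le hw0.le
          _ = ‖w‖ / 2 := by ring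
        have hne : z ≠ w := by
          intro h
          rw [h] at hzw
          nlinarith
        simp only [greenFn, if_neg hne]
        apply ENNReal.ofReal_le_ofReal
        have hlog2 : Real.log 2 ≤ 1 := by
          have := Real.log_le_sub_one_of_pos (show (0:ℝ) < 2 by norm_num); linarith
        have hkeq : Real.log (1 / ‖w‖) = hker w := rfl
        calc Real.log (‖1 - z * (starRingEnd ℂ) w‖ / ‖z - w‖)
            ≤ Real.log (1 / ‖w‖) + 2 * Real.log 2 := lemA z w hw0 hwe hzw
        _ ≤ a^(m+1) + 2*a^(m+1) := by rw [hkeq]; nlinarith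
        _ = 3*a^(m+1) := by ring
      calc gPotential μ z ≤ ∫⁻ _, ENNReal.ofReal (3*a^(m+1)) ∂μ := lintegral_mono_ae haeG
      _ = ENNReal.ofReal (3*a^(m+1)) * μ Set.univ := lintegral_const _
      _ ≤ ENNReal.ofReal (3*a^(m+1)) * ENNReal.ofReal (4*a^(m+1)) := mul_le_mul_right hmass _
      _ = ENNReal.ofReal (12*a^(2*m+2)) := by
            rw [← ENNReal.ofReal_mul (by positivity)]; congr 1; ring
    · push_neg at hcase
      have hzne0 : z ≠ 0 := by
        intro h
        rw [h] at hcase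
        simp at hcase
        exact absurd hcase (not_lt.mpr (Real.exp_pos _).le)
      have hzpunc : z ∈ puncDisk := ⟨hz, by simp [hzne0]⟩
      have hkzle : hker z ≤ 2*a^(m+1) := by
        have hlg := Real.log_le_log (Real.exp_pos _) hcase.le
        rw [Real.log_exp] at hlg
        unfold hker
        rw [one_div, Real.log_inv]
        rw [ht] at hlg
        linarith
      have haeG : ∀ᵐ w ∂μ, greenFn z w ≤
          ENNReal.ofReal (a^(m+1)) * (greenFn z w / ENNReal.ofReal (hker w)) := by
        filter_upwards [hae] with w hw
        obtain ⟨h1, h2⟩ := hK w hw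
        calc greenFn z w = greenFn z w / ENNReal.ofReal (hker w) * ENNReal.ofReal (hker w) :=
              (ENNReal.div_mul_cancel (ofReal_hker_ne_zero ha h1) ENNReal.ofReal_ne_top).symm
        _ ≤ greenFn z w / ENNReal.ofReal (hker w) * ENNReal.ofReal (a^(m+1)) :=
              mul_le_mul_right (ENNReal.ofReal_le_ofReal h2) _
        _ = ENNReal.ofReal (a^(m+1)) * (greenFn z w / ENNReal.ofReal (hker w)) := mul_comm _ _
      calc gPotential μ z
          ≤ ∫⁻ w, ENNReal.ofReal (a^(m+1)) * (greenFn z w / ENNReal.ofReal (hker w)) ∂μ :=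
            lintegral_mono_ae haeG
      _ = ENNReal.ofReal (a^(m+1)) * hPotential μ z :=
            lintegral_const_mul' _ _ ENNReal.ofReal_ne_top
      _ ≤ ENNReal.ofReal (a^(m+1)) * ENNReal.ofReal (hker z) :=
            mul_le_mul_right (hpot z hzpunc) _
      _ ≤ ENNReal.ofReal (a^(m+1)) * ENNReal.ofReal (2*a^(m+1)) :=
            mul_le_mul_right (ENNReal.ofReal_le_ofReal hkzle) _
      _ ≤ ENNReal.ofReal (12*a^(2*m+2)) := by
            rw [← ENNReal.ofReal_mul (by positivity)]
            apply ENNReal.ofReal_le_ofReal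
            have h12 : (0:ℝ) < a^(m+1)*a^(m+1) := by positivity
            calc a^(m+1) * (2*a^(m+1)) = 2*(a^(m+1)*a^(m+1)) := by ring
            _ ≤ 12*(a^(m+1)*a^(m+1)) := by nlinarith
            _ = 12*a^(2*m+2) := by ring
  -- scale down and conclude
  set c : ℝ≥0∞ := ENNReal.ofReal (12 * a^(2*m+2)) with hc
  have hc0 : c ≠ 0 := by
    rw [hc, Ne, ENNReal.ofReal_eq_zero]
    push_neg
    positivity
  have hct : c ≠ ⊤ := ENNReal.ofReal_ne_top
  have hνfin : IsFiniteMeasure (c⁻¹ • μ) := by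
    constructor
    rw [Measure.smul_apply, smul_eq_mul]
    exact ENNReal.mul_lt_top (ENNReal.inv_ne_top.mpr hc0).lt_top (measure_lt_top μ _)
  have hmem : c⁻¹ * μ K ∈ { x : ℝ≥0∞ | ∃ ν : Measure ℂ, IsFiniteMeasure ν ∧ ν Kᶜ = 0 ∧
      (∀ z ∈ unitDisk, gPotential ν z ≤ 1) ∧ x = ν K } := by
    refine ⟨c⁻¹ • μ, hνfin, ?_, ?_, ?_⟩
    · rw [Measure.smul_apply, smul_eq_mul, hsupp, mul_zero]
    · intro z hz
      have : gPotential (c⁻¹ • μ) z = c⁻¹ * gPotential μ z := by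
        unfold gPotential; rw [lintegral_smul_measure, smul_eq_mul]
      rw [this]
      calc c⁻¹ * gPotential μ z ≤ c⁻¹ * c := mul_le_mul_right (hgbound z hz) _
      _ = 1 := ENNReal.inv_mul_cancel hc0 hct
    · rw [Measure.smul_apply, smul_eq_mul]
  have hle : c⁻¹ * μ K ≤ capG K := le_sSup hmem
  calc μ K = c * (c⁻¹ * μ K) := by
        rw [← mul_assoc, ENNReal.mul_inv_cancel hc0 hct, one_mul]
  _ ≤ c * capG K := mul_le_mul_right hle _

-- Direction 2
private lemma capG_le_capH {a : ℝ} (ha : 1 < a) {m : ℕ} {K : Set ℂ}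
    (hK : ∀ w ∈ K, a ^ m ≤ hker w ∧ hker w ≤ a ^ (m + 1)) :
    capG K ≤ ENNReal.ofReal (200 / a ^ (2*m)) * capH K := by
  have ha0 : (0:ℝ) < a := lt_trans one_pos ha
  have ha1m : (1:ℝ) ≤ a ^ m := one_le_pow₀ ha.le
  have hamp : (0:ℝ) < a ^ m := by positivity
  apply sSup_le
  rintro x ⟨μ, hfin, hsupp, hpot, rfl⟩
  have hae : ∀ᵐ w ∂μ, w ∈ K := by rw [ae_iff]; exact hsupp
  set X : ℝ≥0∞ := ENNReal.ofReal (a^m) with hX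
  have hX0 : X ≠ 0 := by rw [hX, Ne, ENNReal.ofReal_eq_zero]; push_neg; positivity
  have hXt : X ≠ ⊤ := ENNReal.ofReal_ne_top
  have hXX : X * X⁻¹ = 1 := ENNReal.mul_inv_cancel hX0 hXt
  have h0disk : (0:ℂ) ∈ unitDisk := by show ‖(0:ℂ)‖ < 1; simp
  have haeG0 : ∀ᵐ w ∂μ, X ≤ greenFn 0 w := by
    filter_upwards [hae] with w hw
    obtain ⟨h1, h2⟩ := hK w hw
    obtain ⟨hw0, hwub, hwlb, hwe⟩ := annW ha h1 h2
    have hne : (0:ℂ) ≠ w := by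
      intro h; rw [← h] at hw0; simp at hw0
    simp only [greenFn, if_neg hne]
    have habs : ‖1 - 0 * (starRingEnd ℂ) w‖ / ‖0 - w‖
        = 1 / ‖w‖ := by simp
    rw [hX, habs]
    exact ENNReal.ofReal_le_ofReal h1
  have hmass : μ Set.univ ≤ X⁻¹ := by
    have h1 : X * μ Set.univ ≤ 1 := by
      calc X * μ Set.univ = ∫⁻ _, X ∂μ := (lintegral_const _).symm
      _ ≤ ∫⁻ w, greenFn 0 w ∂μ := lintegral_mono_ae haeG0
      _ ≤ 1 := hpot 0 h0disk
    calc μ Set.univ = X⁻¹ * (X * μ Set.univ) := by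
          rw [← mul_assoc, ENNReal.inv_mul_cancel hX0 hXt, one_mul]
    _ ≤ X⁻¹ * 1 := mul_le_mul_right h1 _
    _ = X⁻¹ := mul_one _
  set c2 : ℝ≥0∞ := ENNReal.ofReal (a^(2*m)/200) with hc2
  have hc20 : c2 ≠ 0 := by rw [hc2, Ne, ENNReal.ofReal_eq_zero]; push_neg; positivity
  have hc2t : c2 ≠ ⊤ := ENNReal.ofReal_ne_top
  have hpotbound : ∀ z ∈ puncDisk, hPotential (c2 • μ) z ≤ ENNReal.ofReal (hker z) := by
    intro z hz
    obtain ⟨hzd, hz0'⟩ := hz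
    have hz1 : ‖z‖ < 1 := hzd
    have hzne : z ≠ 0 := by simpa using hz0'
    have hzabs0 : 0 < ‖z‖ := by
      rcases eq_or_lt_of_le (norm_nonneg z) with h|h
      · exact absurd (norm_eq_zero.mp h.symm) hzne
      · exact h
    have hsm : hPotential (c2 • μ) z = c2 * hPotential μ z := by
      unfold hPotential; rw [lintegral_smul_measure, smul_eq_mul]
    have hdiv : hPotential μ z ≤ X⁻¹ * gPotential μ z := by
      have haediv : ∀ᵐ w ∂μ, greenFn z w / ENNReal.ofReal (hker w) ≤ X⁻¹ * greenFn z w := by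
        filter_upwards [hae] with w hw
        obtain ⟨h1, h2⟩ := hK w hw
        calc greenFn z w / ENNReal.ofReal (hker w) ≤ greenFn z w / X :=
              ENNReal.div_le_div_left (ENNReal.ofReal_le_ofReal h1) _
        _ = X⁻¹ * greenFn z w := ENNReal.div_eq_inv_mul
      calc hPotential μ z ≤ ∫⁻ w, X⁻¹ * greenFn z w ∂μ := lintegral_mono_ae haediv
      _ = X⁻¹ * gPotential μ z := lintegral_const_mul' _ _ (ENNReal.inv_ne_top.mpr hX0)
    rw [hsm]
    by_cases hcase : ‖z‖ ≤ Real.exp (-(a^m/2))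
    · have hkzge : a^m/2 ≤ hker z := by
        have hlg := Real.log_le_log hzabs0 hcase
        rw [Real.log_exp] at hlg
        unfold hker; rw [one_div, Real.log_inv]; linarith
      have hg1 : gPotential μ z ≤ 1 := hpot z hzd
      calc c2 * hPotential μ z ≤ c2 * (X⁻¹ * 1) :=
            mul_le_mul_right (le_trans hdiv (mul_le_mul_right hg1 _)) _
      _ = ENNReal.ofReal (a^m/200) * (X * X⁻¹) := by
            rw [mul_one, hc2, show a^(2*m)/200 = a^m/200 * a^m by ring,
              ENNReal.ofReal_mul (by positivity), ← hX, mul_assoc]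
      _ = ENNReal.ofReal (a^m/200) := by rw [hXX, mul_one]
      _ ≤ ENNReal.ofReal (hker z) := ENNReal.ofReal_le_ofReal (by linarith)
    · push_neg at hcase
      have hkz0 : 0 < hker z := by
        unfold hker; rw [one_div, Real.log_inv]
        have := Real.log_neg hzabs0 hz1
        linarith
      have haeG : ∀ᵐ w ∂μ, greenFn z w ≤ ENNReal.ofReal (200 * hker z) := by
        filter_upwards [hae] with w hw
        obtain ⟨h1, h2⟩ := hK w hw
        obtain ⟨hw0, hwub, hwlb, hwe⟩ := annW ha h1 h2
        have hwltz : ‖w‖ < ‖z‖ := by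
          calc ‖w‖ ≤ Real.exp (-a^m) := hwub
          _ < Real.exp (-(a^m/2)) := Real.exp_lt_exp.mpr (by linarith)
          _ < ‖z‖ := hcase
        have hne : z ≠ w := fun h => by rw [h] at hwltz; exact lt_irrefl _ hwltz
        simp only [greenFn, if_neg hne]
        apply ENNReal.ofReal_le_ofReal
        by_cases hhalf : 1/2 ≤ ‖z‖
        · exact lemC z w hhalf hz1 hwe
        · push_neg at hhalf
          apply lemD z w hzabs0 hhalf.le
          calc ‖w‖ ≤ Real.exp (-a^m) := hwub
          _ = Real.exp (-(a^m/2)) * Real.exp (-(a^m/2)) := by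
                rw [← Real.exp_add]; congr 1; ring
          _ ≤ ‖z‖ * ‖z‖ :=
                mul_le_mul hcase.le hcase.le (Real.exp_pos _).le hzabs0.le
          _ = (‖z‖)^2 := (sq (‖z‖)).symm
      have hGz : gPotential μ z ≤ ENNReal.ofReal (200 * hker z) * X⁻¹ := by
        calc gPotential μ z ≤ ∫⁻ _, ENNReal.ofReal (200*hker z) ∂μ := lintegral_mono_ae haeG
        _ = ENNReal.ofReal (200*hker z) * μ Set.univ := lintegral_const _
        _ ≤ ENNReal.ofReal (200*hker z) * X⁻¹ := mul_le_mul_right hmass _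
      calc c2 * hPotential μ z ≤ c2 * (X⁻¹ * (ENNReal.ofReal (200*hker z) * X⁻¹)) :=
            mul_le_mul_right (le_trans hdiv (mul_le_mul_right hGz _)) _
      _ = (X*X⁻¹) * (X*X⁻¹) * (ENNReal.ofReal (1/200) * ENNReal.ofReal (200*hker z)) := by
            rw [hc2, show a^(2*m)/200 = a^m * (a^m * (1/200)) by ring,
              ENNReal.ofReal_mul (by positivity), ENNReal.ofReal_mul (by positivity), ← hX]
            ring
      _ = ENNReal.ofReal (hker z) := by
            rw [hXX, one_mul, one_mul, ← ENNReal.ofReal_mul (by norm_num)]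
            congr 1; ring
  have hνfin : IsFiniteMeasure (c2 • μ) := by
    constructor
    rw [Measure.smul_apply, smul_eq_mul]
    exact ENNReal.mul_lt_top hc2t.lt_top (measure_lt_top μ _)
  have hmem : c2 * μ K ∈ { x : ℝ≥0∞ | ∃ ν : Measure ℂ, IsFiniteMeasure ν ∧ ν Kᶜ = 0 ∧
      (∀ z ∈ puncDisk, hPotential ν z ≤ ENNReal.ofReal (hker z)) ∧ x = ν K } := by
    refine ⟨c2 • μ, hνfin, ?_, hpotbound, ?_⟩
    · rw [Measure.smul_apply, smul_eq_mul, hsupp, mul_zero]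
    · rw [Measure.smul_apply, smul_eq_mul]
  have hle : c2 * μ K ≤ capH K := le_sSup hmem
  calc μ K = ENNReal.ofReal (200/a^(2*m)) * (c2 * μ K) := by
        rw [← mul_assoc, hc2, ← ENNReal.ofReal_mul (by positivity),
          show 200/a^(2*m) * (a^(2*m)/200) = 1 by field_simp, ENNReal.ofReal_one, one_mul]
  _ ≤ ENNReal.ofReal (200/a^(2*m)) * capH K := mul_le_mul_right hle _


/-- Equivalence of conditions (5) and (8) of Theorem 1.1: the `h`-capacity Wiener series and
the classical Greenian-capacity Wiener series converge or diverge together. -/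
theorem wiener_series_h_iff_wiener_series_green
    (Ω : Set ℂ) (hΩD : Ω ⊆ puncDisk) (hΩopen : IsOpen Ω)
    (a : ℝ) (ha : 1 < a) (E : ℕ → Set ℂ)
    (hEdef : ∀ n : ℕ, E n =
      {z : ℂ | a ^ n ≤ Real.log (1 / ‖z‖) ∧
        Real.log (1 / ‖z‖) ≤ a ^ (n + 1)} \ Ω) :
    (∑' n : ℕ, ENNReal.ofReal (a ^ (-(n + 1 : ℝ))) * capH (E (n + 1)) ≠ ⊤) ↔
      (∑' n : ℕ, ENNReal.ofReal (a ^ (n + 1)) * capG (E (n + 1)) ≠ ⊤) := by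
  have ha0 : (0:ℝ) < a := lt_trans one_pos ha
  have hKm : ∀ n : ℕ, ∀ w ∈ E (n+1), a ^ (n+1) ≤ hker w ∧ hker w ≤ a ^ ((n+1) + 1) := by
    intro n w hw
    rw [hEdef] at hw
    exact ⟨hw.1.1, hw.1.2⟩
  have hcoef : ∀ n : ℕ, (a : ℝ) ^ (-(n + 1 : ℝ)) = ((a ^ (n+1) : ℝ))⁻¹ := by
    intro n
    rw [show (-(n + 1 : ℝ)) = -(((n+1 : ℕ) : ℝ)) by push_cast; ring,
      Real.rpow_neg ha0.le, Real.rpow_natCast]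
  have key1 : ∀ n : ℕ, ENNReal.ofReal (a ^ (-(n + 1 : ℝ))) * capH (E (n + 1))
      ≤ ENNReal.ofReal (12 * a^2) * (ENNReal.ofReal (a ^ (n + 1)) * capG (E (n + 1))) := by
    intro n
    calc ENNReal.ofReal (a ^ (-(n + 1 : ℝ))) * capH (E (n + 1))
        ≤ ENNReal.ofReal ((a ^ (n+1) : ℝ))⁻¹ *
            (ENNReal.ofReal (12 * a ^ (2*(n+1)+2)) * capG (E (n+1))) := by
          rw [hcoef n]
          exact mul_le_mul_right (capH_le_capG ha (hKm n)) _
    _ = ENNReal.ofReal (12*a^2) * (ENNReal.ofReal (a ^ (n + 1)) * capG (E (n + 1))) := by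
          rw [← mul_assoc, ← ENNReal.ofReal_mul (by positivity),
            show ENNReal.ofReal (12*a^2) * (ENNReal.ofReal (a ^ (n + 1)) * capG (E (n + 1)))
              = ENNReal.ofReal (12*a^2 * a^(n+1)) * capG (E (n + 1)) by
                rw [← mul_assoc, ← ENNReal.ofReal_mul (by positivity)]]
          congr 2
          have hne : (a:ℝ) ≠ 0 := ne_of_gt ha0
          field_simp
          ring
  have key2 : ∀ n : ℕ, ENNReal.ofReal (a ^ (n+1)) * capG (E (n + 1))
      ≤ ENNReal.ofReal 200 * (ENNReal.ofReal (a ^ (-(n + 1 : ℝ))) * capH (E (n + 1))) := by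
    intro n
    calc ENNReal.ofReal (a ^ (n+1)) * capG (E (n + 1))
        ≤ ENNReal.ofReal (a ^ (n+1)) *
            (ENNReal.ofReal (200 / a ^ (2*(n+1))) * capH (E (n+1))) :=
          mul_le_mul_right (capG_le_capH ha (hKm n)) _
    _ = ENNReal.ofReal 200 * (ENNReal.ofReal (a ^ (-(n + 1 : ℝ))) * capH (E (n + 1))) := by
          rw [hcoef n, ← mul_assoc, ← ENNReal.ofReal_mul (by positivity),
            show ENNReal.ofReal (200:ℝ) * (ENNReal.ofReal ((a ^ (n+1) : ℝ))⁻¹ * capH (E (n + 1)))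
              = ENNReal.ofReal (200 * (a^(n+1))⁻¹) * capH (E (n + 1)) by
                rw [← mul_assoc, ← ENNReal.ofReal_mul (by norm_num)]]
          congr 2
          have hne : (a:ℝ) ≠ 0 := ne_of_gt ha0
          field_simp
          ring
  constructor
  · intro hH
    have hsum : (∑' n : ℕ, ENNReal.ofReal (a ^ (n+1)) * capG (E (n+1)))
        ≤ ENNReal.ofReal 200 *
          ∑' n : ℕ, ENNReal.ofReal (a ^ (-(n + 1 : ℝ))) * capH (E (n + 1)) := by
      rw [← ENNReal.tsum_mul_left]
      exact ENNReal.tsum_le_tsum key2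
    exact ne_top_of_le_ne_top (ENNReal.mul_ne_top ENNReal.ofReal_ne_top hH) hsum
  · intro hG
    have hsum : (∑' n : ℕ, ENNReal.ofReal (a ^ (-(n + 1 : ℝ))) * capH (E (n + 1)))
        ≤ ENNReal.ofReal (12*a^2) *
          ∑' n : ℕ, ENNReal.ofReal (a ^ (n+1)) * capG (E (n+1)) := by
      rw [← ENNReal.tsum_mul_left]
      exact ENNReal.tsum_le_tsum key1
    exact ne_top_of_le_ne_top (ENNReal.mul_ne_top ENNReal.ofReal_ne_top hG) hsum

end
end

section
/- Let Ω = {z ∈ ℂ : 0 < |z| < 1} \ {x ∈ ℝ : 0 ≤ x < 1} be the punctured open unit disk with the radius [0,1) on the positive real axis removed. If u is harmonic on Ω, lim_{z→ξ, z∈Ω} u(z) = 0 for every ξ ∈ ∂Ω \ {0}, and there exist C > 0 and δ ∈ (0,1) with |u(z)| ≤ C·log(1/|z|) for all z ∈ Ω with |z| < δ, then u vanishes identically on Ω. (The logarithmic singularity at the origin is removable for the disk with a deleted radius, since the Wiener series diverges.) -/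
open MeasureTheory Filter Set
open scoped ENNReal Topology

noncomputable section

/-- `u` is harmonic on `U`: twice continuously differentiable with vanishing Laplacian
`Δu = ∂²u/∂x² + ∂²u/∂y² = 0` on `U`. -/
def HarmonicOn (u : ℂ → ℝ) (U : Set ℂ) : Prop :=
  ContDiffOn ℝ 2 u U ∧
    ∀ z ∈ U, iteratedFDeriv ℝ 2 u z ![1, 1] + iteratedFDeriv ℝ 2 u z ![Complex.I, Complex.I] = 0

/-- 1D second derivative test: at a local max, the second derivative is nonpositive. -/
lemma secondDeriv_nonpos_of_isLocalMax {g : ℝ → ℝ} {A : ℝ}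
    (hg : ∀ᶠ t in nhds (0:ℝ), DifferentiableAt ℝ g t)
    (h2 : HasDerivAt (deriv g) A 0) (hmax : IsLocalMax g 0) : A ≤ 0 := by
  by_contra hA
  push_neg at hA
  have hg0 : deriv g 0 = 0 := hmax.deriv_eq_zero
  have hslope : Tendsto (slope (deriv g) 0) (nhdsWithin 0 {(0:ℝ)}ᶜ) (nhds A) :=
    hasDerivAt_iff_tendsto_slope.mp h2
  have hev : ∀ᶠ t in nhdsWithin (0:ℝ) (Ioi 0),
      0 < slope (deriv g) 0 t ∧ DifferentiableAt ℝ g t ∧ g t ≤ g 0 := by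
    have h1 : ∀ᶠ t in nhdsWithin (0:ℝ) (Ioi 0), 0 < slope (deriv g) 0 t := by
      have : ∀ᶠ t in nhdsWithin (0:ℝ) {(0:ℝ)}ᶜ, 0 < slope (deriv g) 0 t :=
        hslope.eventually (eventually_gt_nhds hA)
      exact this.filter_mono (nhdsWithin_mono _ (fun t ht => ne_of_gt ht))
    have h2' : ∀ᶠ t in nhdsWithin (0:ℝ) (Ioi 0), DifferentiableAt ℝ g t ∧ g t ≤ g 0 :=
      (hg.and hmax).filter_mono nhdsWithin_le_nhds
    filter_upwards [h1, h2'] with t ha hb using ⟨ha, hb.1, hb.2⟩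
  rw [eventually_iff, mem_nhdsGT_iff_exists_Ioc_subset] at hev
  obtain ⟨t₁, ht₁, hsub⟩ := hev
  have ht₁0 : (0:ℝ) < t₁ := ht₁
  have hdiffIcc : ∀ t ∈ Icc (0:ℝ) t₁, DifferentiableAt ℝ g t := by
    intro t ht
    rcases eq_or_lt_of_le ht.1 with rfl | h
    · exact hg.self_of_nhds
    · exact (hsub ⟨h, ht.2⟩).2.1
  have hmono : StrictMonoOn g (Icc (0:ℝ) t₁) := by
    apply strictMonoOn_of_deriv_pos (convex_Icc 0 t₁)
    · exact fun t ht => (hdiffIcc t ht).continuousAt.continuousWithinAt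
    · intro t ht
      rw [interior_Icc] at ht
      have hs := (hsub ⟨ht.1, le_of_lt ht.2⟩).1
      have : slope (deriv g) 0 t = deriv g t / t := by
        simp [slope_def_field, hg0]
      rw [this] at hs
      have := mul_pos hs ht.1
      rwa [div_mul_cancel₀ _ (ne_of_gt ht.1)] at this
  have : g 0 < g t₁ := hmono ⟨le_refl 0, le_of_lt ht₁0⟩ ⟨le_of_lt ht₁0, le_refl t₁⟩ ht₁0
  exact absurd ((hsub ⟨ht₁0, le_refl t₁⟩).2.2) (not_le.mpr this)

/-- directional second derivative test at a local max. -/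
lemma secondDirDeriv_nonpos_of_isLocalMax {f : ℂ → ℝ} {a : ℂ} (e : ℂ)
    (hf : ∀ᶠ x in nhds a, DifferentiableAt ℝ f x)
    (hf' : DifferentiableAt ℝ (fderiv ℝ f) a)
    (hmax : IsLocalMax f a) :
    fderiv ℝ (fderiv ℝ f) a e e ≤ 0 := by
  set c : ℝ → ℂ := fun t => a + t • e with hc
  have hcd : ∀ t : ℝ, HasDerivAt c e t := by
    intro t
    simpa [hc] using ((hasDerivAt_id t).smul_const e).const_add a
  have hcc : Continuous c := by fun_prop
  have hca : Tendsto c (nhds 0) (nhds a) := by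
    have : c 0 = a := by simp [hc]
    simpa [this] using hcc.tendsto 0
  set g : ℝ → ℝ := fun t => f (c t) with hgdef
  have hev : ∀ᶠ t in nhds (0:ℝ), DifferentiableAt ℝ f (c t) := hca.eventually hf
  have hgd : ∀ᶠ t in nhds (0:ℝ), HasDerivAt g (fderiv ℝ f (c t) e) t := by
    filter_upwards [hev] with t ht
    exact (ht.hasFDerivAt.comp_hasDerivAt t (hcd t))
  have hgdiff : ∀ᶠ t in nhds (0:ℝ), DifferentiableAt ℝ g t := by
    filter_upwards [hgd] with t ht using ht.differentiableAt
  have hderiv_eq : (deriv g) =ᶠ[nhds (0:ℝ)] fun t => fderiv ℝ f (c t) e := by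
    filter_upwards [hgd] with t ht using ht.deriv
  have hψ : HasDerivAt (fun t => fderiv ℝ f (c t)) (fderiv ℝ (fderiv ℝ f) a e) 0 := by
    have h0 : c 0 = a := by simp [hc]
    have hfd : HasFDerivAt (fderiv ℝ f) (fderiv ℝ (fderiv ℝ f) a) (c 0) := by
      rw [h0]; exact hf'.hasFDerivAt
    exact hfd.comp_hasDerivAt 0 (hcd 0)
  have hφ : HasDerivAt (fun t => fderiv ℝ f (c t) e) (fderiv ℝ (fderiv ℝ f) a e e) 0 := by
    have := hψ.clm_apply (hasDerivAt_const 0 e)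
    simpa using this
  have h2 : HasDerivAt (deriv g) (fderiv ℝ (fderiv ℝ f) a e e) 0 :=
    hφ.congr_of_eventuallyEq hderiv_eq
  have hgmax : IsLocalMax g 0 := by
    have h0 : c 0 = a := by simp [hc]
    have hmax' : IsMaxFilter f (nhds (c 0)) (c 0) := by rw [h0]; exact hmax
    have := hmax'.comp_tendsto (by rw [h0]; exact hca : Tendsto c (nhds 0) (nhds (c 0)))
    exact this
  exact secondDeriv_nonpos_of_isLocalMax hgdiff h2 hgmax

def qmap : ℂ → ℝ := fun z => z.re ^ 2 + z.im ^ 2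

def Lq : ℂ →L[ℝ] ℂ →L[ℝ] ℝ :=
  (((2:ℝ) • Complex.reCLM).smulRight Complex.reCLM) +
    (((2:ℝ) • Complex.imCLM).smulRight Complex.imCLM)

lemma Lq_apply (x e : ℂ) : Lq x e = 2 * x.re * e.re + 2 * x.im * e.im := by
  simp [Lq, ContinuousLinearMap.smulRight_apply]

lemma qmap_hasFDerivAt (x : ℂ) : HasFDerivAt qmap (Lq x) x := by
  have h1 : HasFDerivAt (fun z : ℂ => z.re ^ 2) ((2 * x.re) • (Complex.reCLM : ℂ →L[ℝ] ℝ)) x := by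
    have := (hasDerivAt_pow 2 x.re).comp_hasFDerivAt x Complex.reCLM.hasFDerivAt
    simpa [Function.comp_def] using this
  have h2 : HasFDerivAt (fun z : ℂ => z.im ^ 2) ((2 * x.im) • (Complex.imCLM : ℂ →L[ℝ] ℝ)) x := by
    have := (hasDerivAt_pow 2 x.im).comp_hasFDerivAt x Complex.imCLM.hasFDerivAt
    simpa [Function.comp_def] using this
  have := h1.add h2
  have hL : (2 * x.re) • (Complex.reCLM : ℂ →L[ℝ] ℝ) + (2 * x.im) • (Complex.imCLM : ℂ →L[ℝ] ℝ) = Lq x :=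
    ContinuousLinearMap.ext fun e => by simp [Lq_apply]
  rw [hL] at this
  exact this

lemma qmap_fderiv : fderiv ℝ qmap = fun x => Lq x :=
  funext fun x => (qmap_hasFDerivAt x).fderiv

lemma qmap_eq (z : ℂ) : qmap z = ‖z‖ ^ 2 := by
  rw [Complex.sq_norm, Complex.normSq_apply, qmap]; ring

lemma qmap_nonneg (z : ℂ) : 0 ≤ qmap z := by rw [qmap_eq]; positivity

lemma qmap_bound {z : ℂ} {R : ℝ} (h : ‖z‖ ≤ R) : qmap z ≤ R ^ 2 := by
  rw [qmap_eq]
  exact pow_le_pow_left₀ (norm_nonneg z) h 2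

/-- Maximum principle for harmonic functions on a bounded open set with limsup ≤ 0
boundary data. -/
lemma harmonic_max_principle {V : Set ℂ} (hV : IsOpen V) (hVb : Bornology.IsBounded V)
    {v : ℂ → ℝ}
    (hvd : ∀ x ∈ V, ∀ᶠ y in nhds x, DifferentiableAt ℝ v y)
    (hvd2 : ∀ x ∈ V, DifferentiableAt ℝ (fderiv ℝ v) x)
    (hlap : ∀ x ∈ V, fderiv ℝ (fderiv ℝ v) x 1 1 + fderiv ℝ (fderiv ℝ v) x Complex.I Complex.I = 0)
    (hbd : ∀ ξ ∈ frontier V, ∀ ε > (0:ℝ), ∀ᶠ z in nhdsWithin ξ V, v z ≤ ε) :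
    ∀ z ∈ V, v z ≤ 0 := by
  intro z₁ hz₁
  by_contra hpos
  push_neg at hpos
  obtain ⟨R₀, hR₀⟩ := hVb.subset_closedBall 0
  set R : ℝ := max R₀ 1 with hRdef
  have hR1 : (1:ℝ) ≤ R := le_max_right _ _
  have hRpos : (0:ℝ) < R := lt_of_lt_of_le one_pos hR1
  have hRV : V ⊆ Metric.closedBall 0 R :=
    hR₀.trans (Metric.closedBall_subset_closedBall (le_max_left _ _))
  set ε : ℝ := v z₁ / (2 * R ^ 2) with hεdef
  have hε : 0 < ε := div_pos hpos (by positivity)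
  set w : ℂ → ℝ := fun z => v z + ε * qmap z with hwdef
  -- no interior local max for w
  have NOMAX : ∀ z₀ ∈ V, ¬ IsLocalMax w z₀ := by
    intro z₀ hz₀ hmax
    have hwd : ∀ᶠ y in nhds z₀, DifferentiableAt ℝ w y := by
      filter_upwards [hvd z₀ hz₀] with y hy
      exact hy.add (((qmap_hasFDerivAt y).differentiableAt).const_mul ε)
    have hfeq : (fderiv ℝ w) =ᶠ[nhds z₀] fun x => fderiv ℝ v x + ε • Lq x := by
      filter_upwards [hvd z₀ hz₀] with y hy
      have hq : HasFDerivAt (fun z => ε * qmap z) (ε • Lq y) y :=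
        (qmap_hasFDerivAt y).const_mul ε
      rw [show w = fun z => v z + ε * qmap z from hwdef]
      rw [fderiv_fun_add hy hq.differentiableAt, hq.fderiv]
    have hG : HasFDerivAt (fun x : ℂ => ε • Lq x) (ε • Lq) z₀ := by
      have := (ε • Lq).hasFDerivAt (x := z₀)
      exact this
    have hGd : DifferentiableAt ℝ (fun x => fderiv ℝ v x + ε • Lq x) z₀ :=
      (hvd2 z₀ hz₀).add hG.differentiableAt
    have hwd2 : DifferentiableAt ℝ (fderiv ℝ w) z₀ :=
      hGd.congr_of_eventuallyEq hfeq
    have hw2 : fderiv ℝ (fderiv ℝ w) z₀ = fderiv ℝ (fderiv ℝ v) z₀ + ε • Lq := by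
      rw [hfeq.fderiv_eq]
      rw [fderiv_fun_add (hvd2 z₀ hz₀) hG.differentiableAt, hG.fderiv]
    have key : ∀ e : ℂ, fderiv ℝ (fderiv ℝ v) z₀ e e + ε * (Lq e e) ≤ 0 := by
      intro e
      have := secondDirDeriv_nonpos_of_isLocalMax e hwd hwd2 hmax
      rw [hw2] at this
      simpa [ContinuousLinearMap.add_apply, ContinuousLinearMap.smul_apply,
        smul_eq_mul] using this
    have k1 := key 1
    have k2 := key Complex.I
    rw [Lq_apply] at k1 k2
    simp [Complex.I_re, Complex.I_im] at k1 k2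
    have := hlap z₀ hz₀
    nlinarith
  -- main claim : w ≤ ε R² on V
  have habs : ∀ z ∈ V, ‖z‖ ≤ R := by
    intro z hz
    have := hRV hz
    rwa [Metric.mem_closedBall, Complex.dist_eq, sub_zero] at this
  have claim : ∀ z ∈ V, w z ≤ ε * R ^ 2 := by
    by_contra hcl
    push_neg at hcl
    obtain ⟨z₂, hz₂, hz₂gt⟩ := hcl
    have hVne : (w '' V).Nonempty := ⟨w z₂, z₂, hz₂, rfl⟩
    have hcont : ∀ x ∈ V, ContinuousAt w x := by
      intro x hx
      have := (hvd x hx).self_of_nhds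
      exact (this.add (((qmap_hasFDerivAt x).differentiableAt).const_mul ε)).continuousAt
    have hK : IsCompact (closure V) := hVb.isCompact_closure
    have hfr : ∀ z₀ ∈ closure V, z₀ ∉ V → z₀ ∈ frontier V := by
      intro z₀ h1 h2
      exact ⟨h1, by rwa [hV.interior_eq]⟩
    have hbddA : BddAbove (w '' V) := by
      by_contra hnb
      rw [not_bddAbove_iff] at hnb
      have hseq : ∀ n : ℕ, ∃ z ∈ V, (n:ℝ) < w z := by
        intro n
        obtain ⟨y, ⟨z, hz, rfl⟩, hy⟩ := hnb n
        exact ⟨z, hz, hy⟩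
      choose zs hzs hzsgt using hseq
      obtain ⟨z₀, hz₀cl, φ, hφ, hφt⟩ := hK.tendsto_subseq (fun n => subset_closure (hzs n))
      have hlb : ∀ n : ℕ, (n:ℝ) ≤ w (zs (φ n)) := fun n =>
        le_trans (Nat.cast_le.mpr hφ.le_apply) (le_of_lt (hzsgt (φ n)))
      have hAT : Tendsto (fun n => w (zs (φ n))) atTop atTop :=
        tendsto_atTop_mono hlb tendsto_natCast_atTop_atTop
      by_cases hz₀V : z₀ ∈ V
      · exact not_tendsto_atTop_of_tendsto_nhds
          ((hcont z₀ hz₀V).tendsto.comp hφt) hAT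
      · have hb1 := hbd z₀ (hfr z₀ hz₀cl hz₀V) 1 one_pos
        have htW : Tendsto (fun n => zs (φ n)) atTop (nhdsWithin z₀ V) :=
          tendsto_nhdsWithin_iff.mpr ⟨hφt, Eventually.of_forall fun n => hzs (φ n)⟩
        have hub : ∀ᶠ n in atTop, w (zs (φ n)) ≤ 1 + ε * R ^ 2 := by
          filter_upwards [htW.eventually hb1] with n hn
          have : qmap (zs (φ n)) ≤ R ^ 2 := qmap_bound (habs _ (hzs (φ n)))
          have hε' := hε.le
          simp only [hwdef]
          nlinarith
        have := hAT.eventually (eventually_gt_atTop (1 + ε * R ^ 2))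
        obtain ⟨n, h1, h2⟩ := (this.and hub).exists
        linarith
    obtain ⟨xs, _, hxst, hxsmem⟩ := exists_seq_tendsto_sSup hVne hbddA
    choose zs hzs hzseq using fun n => hxsmem n
    obtain ⟨z₀, hz₀cl, φ, hφ, hφt⟩ := hK.tendsto_subseq (fun n => subset_closure (hzs n))
    set S := sSup (w '' V) with hSdef
    have hwS : Tendsto (fun n => w (zs (φ n))) atTop (nhds S) := by
      have : (fun n => w (zs (φ n))) = fun n => xs (φ n) := funext fun n => hzseq (φ n)
      rw [this]
      exact hxst.comp hφ.tendsto_atTop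
    by_cases hz₀V : z₀ ∈ V
    · have hwz₀ : w z₀ = S :=
        tendsto_nhds_unique ((hcont z₀ hz₀V).tendsto.comp hφt) hwS
      refine NOMAX z₀ hz₀V ?_
      filter_upwards [hV.mem_nhds hz₀V] with y hy
      rw [hwz₀]
      exact le_csSup hbddA ⟨y, hy, rfl⟩
    · have hfr₀ := hfr z₀ hz₀cl hz₀V
      have hSle : ∀ δ > (0:ℝ), S ≤ δ + ε * R ^ 2 := by
        intro δ hδ
        have htW : Tendsto (fun n => zs (φ n)) atTop (nhdsWithin z₀ V) :=
          tendsto_nhdsWithin_iff.mpr ⟨hφt, Eventually.of_forall fun n => hzs (φ n)⟩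
        refine le_of_tendsto hwS ?_
        filter_upwards [htW.eventually (hbd z₀ hfr₀ δ hδ)] with n hn
        have : qmap (zs (φ n)) ≤ R ^ 2 := qmap_bound (habs _ (hzs (φ n)))
        have hε' := hε.le
        simp only [hwdef]
        nlinarith
      have hS2 : S ≤ ε * R ^ 2 := by
        by_contra hS2
        push_neg at hS2
        have := hSle ((S - ε * R ^ 2) / 2) (by linarith)
        linarith
      have := le_csSup hbddA (⟨z₂, hz₂, rfl⟩ : w z₂ ∈ w '' V)
      linarith
  have hfin := claim z₁ hz₁
  have hq1 : 0 ≤ qmap z₁ := qmap_nonneg z₁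
  have hεR : ε * R ^ 2 = v z₁ / 2 := by
    rw [hεdef]; field_simp
  have : v z₁ ≤ v z₁ / 2 := by
    simp only [hwdef] at hfin
    nlinarith
  linarith

/-- Pointwise harmonicity data in fderiv form. -/
structure HarmFD (v : ℂ → ℝ) (x : ℂ) : Prop where
  ev : ∀ᶠ y in nhds x, DifferentiableAt ℝ v y
  d2 : DifferentiableAt ℝ (fderiv ℝ v) x
  lap : fderiv ℝ (fderiv ℝ v) x 1 1 + fderiv ℝ (fderiv ℝ v) x Complex.I Complex.I = 0

lemma HarmFD.sub {v w : ℂ → ℝ} {x : ℂ} (hv : HarmFD v x) (hw : HarmFD w x) :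
    HarmFD (fun z => v z - w z) x := by
  have hev : ∀ᶠ y in nhds x, DifferentiableAt ℝ (fun z => v z - w z) y := by
    filter_upwards [hv.ev, hw.ev] with y h1 h2 using h1.sub h2
  have hfeq : (fderiv ℝ fun z => v z - w z) =ᶠ[nhds x]
      fun y => fderiv ℝ v y - fderiv ℝ w y := by
    filter_upwards [hv.ev, hw.ev] with y h1 h2 using fderiv_fun_sub h1 h2
  have hd : DifferentiableAt ℝ (fun y => fderiv ℝ v y - fderiv ℝ w y) x :=
    hv.d2.sub hw.d2
  refine ⟨hev, hd.congr_of_eventuallyEq hfeq, ?_⟩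
  have h2 : fderiv ℝ (fderiv ℝ fun z => v z - w z) x =
      fderiv ℝ (fderiv ℝ v) x - fderiv ℝ (fderiv ℝ w) x := by
    rw [hfeq.fderiv_eq, fderiv_fun_sub hv.d2 hw.d2]
  rw [h2]
  have := hv.lap
  have := hw.lap
  simp only [ContinuousLinearMap.sub_apply]
  linarith

/-- The bilinear map `c ↦ (w ↦ (c * w).im)`. -/
def Tim : ℂ →L[ℝ] ℂ →L[ℝ] ℝ :=
  ((ContinuousLinearMap.compL ℝ ℂ ℂ ℝ) Complex.imCLM).comp (ContinuousLinearMap.mul ℝ ℂ)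

@[simp] lemma Tim_apply (c w : ℂ) : Tim c w = (c * w).im := rfl

/-- If `g` is ℂ-differentiable at `y`, the real derivative of `Im ∘ g` is `Tim (deriv g y)`. -/
lemma hasFDerivAt_im_comp {g : ℂ → ℂ} {y : ℂ} (hg : DifferentiableAt ℂ g y) :
    HasFDerivAt (fun z => (g z).im) (Tim (deriv g y)) y := by
  have h1 : HasFDerivAt g
      (((1 : ℂ →L[ℂ] ℂ).smulRight (deriv g y)).restrictScalars ℝ) y :=
    (hg.hasDerivAt.hasFDerivAt).restrictScalars ℝ
  have h2 := Complex.imCLM.hasFDerivAt.comp y h1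
  refine h2.congr_fderiv ?_
  ext w
  simp [Tim, mul_comm]

/-- `Im` of a holomorphic function is harmonic (in `HarmFD` form). -/
lemma harmFD_im_holo {g : ℂ → ℂ} {W : Set ℂ} (hW : IsOpen W)
    (hg : DifferentiableOn ℂ g W) {x : ℂ} (hx : x ∈ W) :
    HarmFD (fun z => (g z).im) x := by
  have hgat : ∀ y ∈ W, DifferentiableAt ℂ g y := fun y hy =>
    (hg y hy).differentiableAt (hW.mem_nhds hy)
  have hWx : W ∈ nhds x := hW.mem_nhds hx
  have hev : ∀ᶠ y in nhds x, DifferentiableAt ℝ (fun z => (g z).im) y := by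
    filter_upwards [hWx] with y hy
    exact (hasFDerivAt_im_comp (hgat y hy)).differentiableAt
  have hfeq : (fderiv ℝ fun z => (g z).im) =ᶠ[nhds x] fun y => Tim (deriv g y) := by
    filter_upwards [hWx] with y hy
    exact (hasFDerivAt_im_comp (hgat y hy)).fderiv
  -- deriv g is ℂ-differentiable at x
  have han : AnalyticOnNhd ℂ g W := hg.analyticOnNhd hW
  have hderiv : DifferentiableAt ℂ (deriv g) x :=
    ((han.deriv) x hx).differentiableAt
  have hB : HasFDerivAt (deriv g)
      (((1 : ℂ →L[ℂ] ℂ).smulRight (deriv (deriv g) x)).restrictScalars ℝ) x :=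
    (hderiv.hasDerivAt.hasFDerivAt).restrictScalars ℝ
  have hcomp : HasFDerivAt (fun y => Tim (deriv g y))
      (Tim.comp (((1 : ℂ →L[ℂ] ℂ).smulRight (deriv (deriv g) x)).restrictScalars ℝ)) x :=
    Tim.hasFDerivAt.comp x hB
  refine ⟨hev, hcomp.differentiableAt.congr_of_eventuallyEq hfeq, ?_⟩
  have h2 : fderiv ℝ (fderiv ℝ fun z => (g z).im) x =
      Tim.comp (((1 : ℂ →L[ℂ] ℂ).smulRight (deriv (deriv g) x)).restrictScalars ℝ) := by
    rw [hfeq.fderiv_eq, hcomp.fderiv]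
  rw [h2]
  set c := deriv (deriv g) x
  have e1 : Tim.comp (((1 : ℂ →L[ℂ] ℂ).smulRight c).restrictScalars ℝ) 1 1 = c.im := by
    simp [Tim]
  have e2 : Tim.comp (((1 : ℂ →L[ℂ] ℂ).smulRight c).restrictScalars ℝ)
      Complex.I Complex.I = (Complex.I * c * Complex.I).im := by
    simp [Tim, mul_comm]
  rw [e1, e2]
  have : Complex.I * c * Complex.I = -c := by
    ring_nf
    simp [Complex.I_sq]
  rw [this]
  simp

/-- branch of √ mapping ℂ minus `[0,∞)` to the upper half plane -/
def sqm (z : ℂ) : ℂ := Complex.I * (-z) ^ (1/2 : ℂ)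

def Usq : Set ℂ := {z : ℂ | -z ∈ Complex.slitPlane}

lemma isOpen_Usq : IsOpen Usq :=
  Complex.isOpen_slitPlane.preimage (continuous_neg)

lemma ne_zero_of_mem_Usq {z : ℂ} (hz : z ∈ Usq) : z ≠ 0 := by
  intro h
  have h2 : -z ∈ Complex.slitPlane := hz
  rw [h] at h2
  exact Complex.slitPlane_ne_zero h2 (by simp)

lemma sqm_differentiableAt {z : ℂ} (hz : z ∈ Usq) : DifferentiableAt ℂ sqm z := by
  have h1 : HasDerivAt (fun w : ℂ => -w) (-1) z := by
    exact (hasDerivAt_id z).neg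
  have h2 := h1.cpow_const (c := (1/2 : ℂ)) (hz : -z ∈ Complex.slitPlane)
  exact ((h2.differentiableAt).const_mul Complex.I)

lemma sqm_differentiableOn : DifferentiableOn ℂ sqm Usq := fun z hz =>
  (sqm_differentiableAt hz).differentiableWithinAt

lemma arg_half_mem {w : ℂ} (hw : w ∈ Complex.slitPlane) :
    Complex.arg w / 2 ∈ Set.Ioo (-(Real.pi/2)) (Real.pi/2) := by
  have h1 := Complex.neg_pi_lt_arg w
  have h2 := Complex.arg_le_pi w
  have h3 := Complex.slitPlane_arg_ne_pi hw
  constructor <;> [linarith; (have := lt_of_le_of_ne h2 h3; linarith)]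

lemma re_cpow_half_pos {w : ℂ} (hw : w ∈ Complex.slitPlane) :
    0 < ((w : ℂ) ^ (1/2 : ℂ)).re := by
  have hne : w ≠ 0 := Complex.slitPlane_ne_zero hw
  rw [Complex.cpow_def_of_ne_zero hne]
  rw [Complex.exp_re]
  have him : (Complex.log w * (1/2 : ℂ)).im = Complex.arg w / 2 := by
    simp [Complex.mul_im, Complex.log_im, Complex.log_re]
    ring
  rw [him]
  have hcos : 0 < Real.cos (Complex.arg w / 2) :=
    Real.cos_pos_of_mem_Ioo (arg_half_mem hw)
  positivity

lemma sqm_im_pos {z : ℂ} (hz : z ∈ Usq) : 0 < (sqm z).im := by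
  have : (sqm z).im = ((-z) ^ (1/2 : ℂ)).re := by
    simp [sqm, Complex.mul_im]
  rw [this]
  exact re_cpow_half_pos hz

lemma sqm_abs {z : ℂ} (hz : z ∈ Usq) :
    ‖sqm z‖ = Real.sqrt (‖z‖) := by
  have hne : (-z) ≠ 0 := Complex.slitPlane_ne_zero hz
  have h1 : ‖sqm z‖ = ‖(-z) ^ (1/2 : ℂ)‖ := by
    simp [sqm]
  rw [h1, Complex.norm_cpow_of_ne_zero hne]
  simp [Real.sqrt_eq_rpow]

lemma sqm_normSq {z : ℂ} (hz : z ∈ Usq) :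
    Complex.normSq (sqm z) = ‖z‖ := by
  have := sqm_abs hz
  rw [← Complex.sq_norm, this, Real.sq_sqrt (norm_nonneg z)]

def Qm (ρ : ℝ) (z : ℂ) : ℂ := (sqm z - (ρ:ℂ)) / (sqm z + (ρ:ℂ))

def Gb (c ρ : ℝ) (z : ℂ) : ℂ := (c : ℂ) * Complex.log (Qm ρ z)

variable {ρ : ℝ} {z : ℂ}

lemma denom_ne (hz : z ∈ Usq) : sqm z + (ρ:ℂ) ≠ 0 := by
  intro h
  have := congrArg Complex.im h
  simp at this
  exact absurd this (ne_of_gt (sqm_im_pos hz))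

lemma Qm_im (hz : z ∈ Usq) :
    (Qm ρ z).im = 2 * ρ * (sqm z).im / Complex.normSq (sqm z + (ρ:ℂ)) := by
  rw [Qm, Complex.div_im]
  simp [Complex.add_im, Complex.add_re, Complex.sub_im, Complex.sub_re]
  ring

lemma Qm_im_pos (hz : z ∈ Usq) (hρ : 0 < ρ) : 0 < (Qm ρ z).im := by
  rw [Qm_im hz]
  have h1 := sqm_im_pos hz
  have h2 : 0 < Complex.normSq (sqm z + (ρ:ℂ)) :=
    Complex.normSq_pos.mpr (denom_ne hz)
  positivity

lemma Qm_re (hz : z ∈ Usq) :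
    (Qm ρ z).re = (Complex.normSq (sqm z) - ρ^2) / Complex.normSq (sqm z + (ρ:ℂ)) := by
  rw [Qm, Complex.div_re]
  simp [Complex.add_im, Complex.add_re, Complex.sub_im, Complex.sub_re, Complex.normSq_apply]
  ring

lemma Qm_slitPlane (hz : z ∈ Usq) (hρ : 0 < ρ) : Qm ρ z ∈ Complex.slitPlane :=
  Or.inr (ne_of_gt (Qm_im_pos hz hρ))

lemma Gb_differentiableOn (c : ℝ) (hρ : 0 < ρ) : DifferentiableOn ℂ (Gb c ρ) Usq := by
  intro z hz
  have h1 : DifferentiableAt ℂ (fun w => Qm ρ w) z := by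
    apply DifferentiableAt.div
    · exact (sqm_differentiableAt hz).sub_const _
    · exact (sqm_differentiableAt hz).add_const _
    · exact denom_ne hz
  exact ((h1.clog (Qm_slitPlane hz hρ)).const_mul _).differentiableWithinAt

lemma Gb_im (c : ℝ) : (Gb c ρ z).im = c * Complex.arg (Qm ρ z) := by
  rw [Gb]
  simp [Complex.log_im]

lemma Qm_arg_nonneg (hz : z ∈ Usq) (hρ : 0 < ρ) : 0 ≤ Complex.arg (Qm ρ z) :=
  Complex.arg_nonneg_iff.mpr (Qm_im_pos hz hρ).le

/-- on the circle `|z| = ρ²` the argument is exactly `π/2`. -/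
lemma Qm_arg_circle (hz : z ∈ Usq) (hρ : 0 < ρ)
    (habs : ‖z‖ = ρ^2) : Complex.arg (Qm ρ z) = Real.pi / 2 := by
  rw [Complex.arg_eq_pi_div_two_iff]
  refine ⟨?_, Qm_im_pos hz hρ⟩
  rw [Qm_re hz, sqm_normSq hz, habs]
  simp

/-- quantitative bound for the argument away from the circle. -/
lemma Qm_arg_bound (hz : z ∈ Usq) (hρ : 0 < ρ)
    (habs : ρ^2 < ‖z‖) :
    Complex.arg (Qm ρ z) ≤
      (Real.pi/2) * (2 * ρ * (sqm z).im / (‖z‖ - ρ^2)) := by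
  set Q := Qm ρ z with hQ
  have hRe : 0 < Q.re := by
    rw [Qm_re hz, sqm_normSq hz]
    have h2 : 0 < Complex.normSq (sqm z + (ρ:ℂ)) :=
      Complex.normSq_pos.mpr (denom_ne hz)
    have : 0 < ‖z‖ - ρ^2 := by linarith
    positivity
  have hIm : 0 < Q.im := Qm_im_pos hz hρ
  have harg1 : 0 ≤ Complex.arg Q := Qm_arg_nonneg hz hρ
  have harg2 : Complex.arg Q ≤ Real.pi / 2 :=
    Complex.arg_le_pi_div_two_iff.mpr (Or.inl hRe.le)
  have hQne : Q ≠ 0 := by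
    intro h
    rw [h] at hIm
    simp at hIm
  have jordan := Real.mul_le_sin harg1 harg2
  rw [Complex.sin_arg] at jordan
  have habsQ : Q.re ≤ ‖Q‖ := Complex.re_le_norm Q
  have habsQpos : 0 < ‖Q‖ := norm_pos_iff.mpr hQne
  have hdiv : Q.im / ‖Q‖ ≤ Q.im / Q.re :=
    div_le_div_of_nonneg_left hIm.le hRe habsQ
  have key : Complex.arg Q ≤ (Real.pi/2) * (Q.im / Q.re) := by
    have hπ : (0:ℝ) < Real.pi := Real.pi_pos
    have h1 : 2 / Real.pi * Complex.arg Q ≤ Q.im / Q.re := le_trans jordan hdiv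
    calc Complex.arg Q = (Real.pi/2) * (2/Real.pi * Complex.arg Q) := by
          field_simp
      _ ≤ (Real.pi/2) * (Q.im / Q.re) := by
          apply mul_le_mul_of_nonneg_left h1 (by positivity)
  refine le_trans key ?_
  apply mul_le_mul_of_nonneg_left _ (by positivity)
  rw [Qm_im hz, Qm_re hz, sqm_normSq hz]
  have hns : 0 < Complex.normSq (sqm z + (ρ:ℂ)) := Complex.normSq_pos.mpr (denom_ne hz)
  have hd : 0 < ‖z‖ - ρ^2 := by linarith
  have heq : 2 * ρ * (sqm z).im / Complex.normSq (sqm z + (ρ:ℂ)) /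
      ((‖z‖ - ρ ^ 2) / Complex.normSq (sqm z + (ρ:ℂ))) =
      2 * ρ * (sqm z).im / (‖z‖ - ρ^2) := by
    field_simp
  rw [heq]

lemma harmFD_of_harmonicOn {u : ℂ → ℝ} {Ω : Set ℂ} (hΩ : IsOpen Ω)
    (hu : HarmonicOn u Ω) {x : ℂ} (hx : x ∈ Ω) : HarmFD u x := by
  have hat : ∀ y ∈ Ω, ContDiffAt ℝ 2 u y := fun y hy =>
    (hu.1 y hy).contDiffAt (hΩ.mem_nhds hy)
  refine ⟨?_, ?_, ?_⟩
  · filter_upwards [hΩ.mem_nhds hx] with y hy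
    exact (hat y hy).differentiableAt two_ne_zero
  · exact ((hat x hx).fderiv_right (le_refl 2)).differentiableAt one_ne_zero
  · have := hu.2 x hx
    rw [iteratedFDeriv_two_apply, iteratedFDeriv_two_apply] at this
    simpa using this

set_option maxHeartbeats 2000000 in
/-- The logarithmic singularity at the origin is removable for the punctured unit disk with
the radius `[0,1)` deleted. -/
theorem removable_log_singularity_disk_minus_radius
    (Ω : Set ℂ) (hΩ : Ω = puncDisk \ {x : ℂ | ∃ t : ℝ, 0 ≤ t ∧ t < 1 ∧ x = (t : ℂ)})
    (u : ℂ → ℝ) (hu : HarmonicOn u Ω)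
    (hbdry : ∀ ξ ∈ frontier Ω \ {0}, Tendsto u (𝓝[Ω] ξ) (𝓝 0))
    (hgrowth : ∃ C > (0 : ℝ), ∃ δ ∈ Set.Ioo (0 : ℝ) 1,
      ∀ z ∈ Ω, ‖z‖ < δ → |u z| ≤ C * Real.log (1 / ‖z‖)) :
    ∀ z ∈ Ω, u z = 0 := by
  obtain ⟨C, hC, δ, hδ, hgr⟩ := hgrowth
  -- Ω = unitDisk ∩ Usq
  have hΩeq : Ω = unitDisk ∩ Usq := by
    rw [hΩ]
    ext z
    constructor
    · rintro ⟨⟨hd, hz0⟩, hslit⟩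
      refine ⟨hd, ?_⟩
      by_contra hzU
      rw [Usq, mem_setOf_eq, Complex.mem_slitPlane_iff] at hzU
      push_neg at hzU
      obtain ⟨h1, h2⟩ := hzU
      simp only [Complex.neg_re, Complex.neg_im, neg_eq_zero] at h1 h2
      have hre : 0 ≤ z.re := by linarith [h1]
      have hzeq : z = ((z.re : ℝ) : ℂ) := by
        apply Complex.ext
        · exact (Complex.ofReal_re z.re).symm
        · simp [h2]
      have habs : ‖z‖ = z.re := by
        nth_rewrite 1 [hzeq]
        rw [Complex.norm_of_nonneg hre]
      exact hslit ⟨z.re, hre, by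
        have : ‖z‖ < 1 := hd
        rw [habs] at this
        exact this, hzeq⟩
    · rintro ⟨hd, hU⟩
      refine ⟨⟨hd, ne_zero_of_mem_Usq hU⟩, ?_⟩
      rintro ⟨t, ht0, ht1, rfl⟩
      rw [Usq, mem_setOf_eq, Complex.mem_slitPlane_iff] at hU
      simp only [Complex.neg_re, Complex.neg_im, Complex.ofReal_re, Complex.ofReal_im,
        neg_zero, ne_eq, not_true_eq_false, or_false, neg_eq_zero] at hU
      linarith
  have hUopen : IsOpen unitDisk := by
    have : unitDisk = (fun z : ℂ => ‖z‖) ⁻¹' (Iio 1) := rfl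
    rw [this]
    exact IsOpen.preimage continuous_norm isOpen_Iio
  have hΩopen : IsOpen Ω := by rw [hΩeq]; exact hUopen.inter isOpen_Usq
  have hΩU : Ω ⊆ Usq := by rw [hΩeq]; exact inter_subset_right
  have hΩd : Ω ⊆ unitDisk := by rw [hΩeq]; exact inter_subset_left
  -- main one-sided estimate
  have main : ∀ v : ℂ → ℝ, (∀ x ∈ Ω, HarmFD v x) →
      (∀ ξ ∈ frontier Ω \ {0}, Tendsto v (𝓝[Ω] ξ) (𝓝 0)) →
      (∀ z ∈ Ω, ‖z‖ < δ → v z ≤ C * Real.log (1 / ‖z‖)) →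
      ∀ z₀ ∈ Ω, v z₀ ≤ 0 := by
    intro v hv hb hg z₀ hz₀
    set A : ℝ := ‖z₀‖ with hA
    have hA0 : 0 < A := norm_pos_iff.mpr (ne_zero_of_mem_Usq (hΩU hz₀))
    set S : ℝ := (sqm z₀).im with hS
    have hS0 : 0 < S := sqm_im_pos (hΩU hz₀)
    set Fb : ℝ → ℝ := fun ρ =>
      (2/Real.pi * (C * Real.log (1/ρ^2))) *
        ((Real.pi/2) * (2 * ρ * S / (A - ρ^2))) with hFb
    have key : ∀ ρ : ℝ, 0 < ρ → ρ < 1 → ρ^2 < δ → ρ^2 < A → v z₀ ≤ Fb ρ := by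
      intro ρ hρ0 hρ1 hρδ hρA
      set c : ℝ := 2/Real.pi * (C * Real.log (1/ρ^2)) with hc
      have hlogpos : 0 ≤ Real.log (1/ρ^2) := by
        apply Real.log_nonneg
        rw [le_div_iff₀ (by positivity : (0:ℝ) < ρ^2)]
        nlinarith
      have hc0 : 0 ≤ c := by
        have := Real.pi_pos
        rw [hc]; positivity
      set b : ℂ → ℝ := fun z => (Gb c ρ z).im with hbdef
      set V : Set ℂ := Ω ∩ {z | ρ^2 < ‖z‖} with hV
      have hVopen : IsOpen V :=
        hΩopen.inter (isOpen_lt continuous_const continuous_norm)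
      have hVsubΩ : V ⊆ Ω := inter_subset_left
      have hVb : Bornology.IsBounded V := by
        apply (Metric.isBounded_ball (x := (0:ℂ)) (r := 1)).subset
        intro z hz
        have := hΩd (hVsubΩ hz)
        rwa [Metric.mem_ball, Complex.dist_eq, sub_zero]
      have hHarm : ∀ x ∈ V, HarmFD (fun z => v z - b z) x := fun x hx =>
        (hv x (hVsubΩ hx)).sub
          (harmFD_im_holo isOpen_Usq (Gb_differentiableOn c hρ0) (hΩU (hVsubΩ hx)))
      have hbnonneg : ∀ z ∈ Ω, 0 ≤ b z := by
        intro z hz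
        rw [hbdef]
        simp only
        rw [Gb_im]
        exact mul_nonneg hc0 (Qm_arg_nonneg (hΩU hz) hρ0)
      have hclosV : closure V ⊆ {z : ℂ | ρ^2 ≤ ‖z‖} := by
        apply closure_minimal
        · intro z hz
          have h3 : ρ^2 < ‖z‖ := hz.2
          exact h3.le
        · exact isClosed_le continuous_const continuous_norm
      -- boundary condition
      have hbd : ∀ ξ ∈ frontier V, ∀ ε > (0:ℝ), ∀ᶠ z in 𝓝[V] ξ, v z - b z ≤ ε := by
        intro ξ hξ ε hε
        have hξcl : ξ ∈ closure V := hξ.1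
        have hξnV : ξ ∉ V := by
          intro h
          exact hξ.2 (by rwa [hVopen.interior_eq])
        have hξabs : ρ^2 ≤ ‖ξ‖ := hclosV hξcl
        by_cases hξΩ : ξ ∈ Ω
        · -- circle case : |ξ| = ρ²
          have hcirc : ‖ξ‖ = ρ^2 := by
            rcases eq_or_lt_of_le hξabs with h | h
            · exact h.symm
            · exact absurd ⟨hξΩ, h⟩ hξnV
          have hvb : v ξ - b ξ ≤ 0 := by
            have h1 : v ξ ≤ C * Real.log (1/ρ^2) := by
              have := hg ξ hξΩ (by rw [hcirc]; exact hρδ)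
              rwa [hcirc] at this
            have h2 : b ξ = C * Real.log (1/ρ^2) := by
              rw [hbdef]
              simp only
              rw [Gb_im, Qm_arg_circle (hΩU hξΩ) hρ0 hcirc, hc]
              have hπ := Real.pi_ne_zero
              field_simp
            linarith
          have hcont : ContinuousAt (fun z => v z - b z) ξ := by
            have h1 : DifferentiableAt ℝ (fun z => v z - b z) ξ :=
              ((hv ξ hξΩ).sub (harmFD_im_holo isOpen_Usq
                (Gb_differentiableOn c hρ0) (hΩU hξΩ))).ev.self_of_nhds
            exact h1.continuousAt
          have : ∀ᶠ z in 𝓝 ξ, v z - b z < (v ξ - b ξ) + ε :=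
            hcont.eventually_lt_const (by show v ξ - b ξ < v ξ - b ξ + ε; linarith)
          apply Eventually.filter_mono nhdsWithin_le_nhds
          filter_upwards [this] with z hz
          linarith
        · -- genuine boundary of Ω
          have hξfr : ξ ∈ frontier Ω := by
            refine ⟨?_, by rwa [hΩopen.interior_eq]⟩
            exact closure_mono hVsubΩ hξcl
          have hξ0 : ξ ≠ 0 := by
            intro h
            rw [h] at hξabs
            simp at hξabs
            nlinarith
          have htd := hb ξ ⟨hξfr, hξ0⟩
          have hev : ∀ᶠ z in 𝓝[Ω] ξ, v z < ε := htd.eventually (gt_mem_nhds hε)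
          have hev2 : ∀ᶠ z in 𝓝[V] ξ, v z < ε :=
            hev.filter_mono (nhdsWithin_mono ξ hVsubΩ)
          filter_upwards [hev2, self_mem_nhdsWithin] with z h1 h2
          have := hbnonneg z (hVsubΩ h2)
          linarith
      have := harmonic_max_principle hVopen hVb
        (fun x hx => (hHarm x hx).ev) (fun x hx => (hHarm x hx).d2)
        (fun x hx => (hHarm x hx).lap) hbd z₀ ⟨hz₀, hρA⟩
      have hbz₀ : b z₀ ≤ c * ((Real.pi/2) * (2 * ρ * S / (A - ρ^2))) := by
        rw [hbdef]
        simp only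
        rw [Gb_im]
        exact mul_le_mul_of_nonneg_left (Qm_arg_bound (hΩU hz₀) hρ0 hρA) hc0
      rw [hFb]
      have : v z₀ ≤ b z₀ := by linarith
      calc v z₀ ≤ b z₀ := this
        _ ≤ c * ((Real.pi/2) * (2 * ρ * S / (A - ρ^2))) := hbz₀
        _ = (2/Real.pi * (C * Real.log (1/ρ^2))) *
              ((Real.pi/2) * (2 * ρ * S / (A - ρ^2))) := by rw [hc]
    -- limit as ρ → 0⁺
    have hFblim : Tendsto Fb (𝓝[>] (0:ℝ)) (𝓝 0) := by
      have t1 : Tendsto (fun ρ : ℝ => Real.log ρ * ρ) (𝓝[>] (0:ℝ)) (𝓝 0) := by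
        have := tendsto_log_mul_rpow_nhdsGT_zero (r := 1) one_pos
        apply this.congr'
        filter_upwards [self_mem_nhdsWithin] with ρ hρ
        rw [Real.rpow_one]
      have heq : ∀ᶠ ρ in 𝓝[>] (0:ℝ), Fb ρ =
          ((2/Real.pi * C) * (Real.pi/2) * 2 * (-2)) *
            ((Real.log ρ * ρ) * (S / (A - ρ^2))) := by
        have hmemA : Ioo (0:ℝ) (Real.sqrt A) ∈ 𝓝[>] (0:ℝ) :=
          Ioo_mem_nhdsGT_of_mem ⟨le_refl 0, Real.sqrt_pos.mpr hA0⟩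
        filter_upwards [hmemA] with ρ hρ
        have hρ0 : (0:ℝ) < ρ := hρ.1
        have hρA : ρ^2 < A := by
          have := Real.sq_sqrt hA0.le
          nlinarith [hρ.2, Real.sqrt_nonneg A]
        have hAne : A - ρ^2 ≠ 0 := by linarith
        have hlog : Real.log (1/ρ^2) = -(2 * Real.log ρ) := by
          rw [one_div, Real.log_inv, Real.log_pow]
          push_cast
          ring
        rw [hFb]
        simp only
        rw [hlog]
        field_simp [Real.pi_ne_zero]
      rw [tendsto_congr' heq]
      have t2 : Tendsto (fun ρ : ℝ => S / (A - ρ^2)) (𝓝[>] (0:ℝ)) (𝓝 (S / A)) := by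
        apply Tendsto.mono_left _ nhdsWithin_le_nhds
        have hcA : Continuous (fun ρ : ℝ => A - ρ^2) := continuous_const.sub (continuous_pow 2)
        have h2 : Tendsto (fun ρ : ℝ => A - ρ^2) (𝓝 0) (𝓝 A) := by
          have := hcA.tendsto 0
          simpa using this
        exact tendsto_const_nhds.div h2 (ne_of_gt hA0)
      have t3 : Tendsto (fun ρ : ℝ => (Real.log ρ * ρ) * (S / (A - ρ^2)))
          (𝓝[>] (0:ℝ)) (𝓝 0) := by
        have := t1.mul t2
        simpa using this
      have := t3.const_mul ((2/Real.pi * C) * (Real.pi/2) * 2 * (-2))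
      simpa using this
    -- conclude
    have hev : ∀ᶠ ρ in 𝓝[>] (0:ℝ), v z₀ ≤ Fb ρ := by
      set a : ℝ := min 1 (min (Real.sqrt δ) (Real.sqrt A)) with ha
      have ha0 : 0 < a := by
        apply lt_min one_pos
        apply lt_min <;> [exact Real.sqrt_pos.mpr hδ.1; exact Real.sqrt_pos.mpr hA0]
      have hmem : Ioo (0:ℝ) a ∈ 𝓝[>] (0:ℝ) := Ioo_mem_nhdsGT_of_mem ⟨le_refl 0, ha0⟩
      filter_upwards [hmem] with ρ hρ
      obtain ⟨h0, h1⟩ := hρ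
      refine key ρ h0 (lt_of_lt_of_le h1 (min_le_left _ _)) ?_ ?_
      · have h2 : ρ < Real.sqrt δ := lt_of_lt_of_le h1
          ((min_le_right _ _).trans (min_le_left _ _))
        have := Real.sq_sqrt hδ.1.le
        nlinarith [Real.sqrt_nonneg δ]
      · have h2 : ρ < Real.sqrt A := lt_of_lt_of_le h1
          ((min_le_right _ _).trans (min_le_right _ _))
        have := Real.sq_sqrt hA0.le
        nlinarith [Real.sqrt_nonneg A]
    exact ge_of_tendsto hFblim hev
  -- apply to u and -u
  intro z hz
  have h1 : u z ≤ 0 := by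
    apply main u (fun x hx => harmFD_of_harmonicOn hΩopen hu hx) hbdry
      (fun z hz hlt => le_trans (le_abs_self _) (hgr z hz hlt)) z hz
  have h2 : -u z ≤ 0 := by
    have hneg : ∀ x ∈ Ω, HarmFD (fun w => -u w) x := by
      intro x hx
      have hz' := harmFD_of_harmonicOn hΩopen hu hx
      have h0 : HarmFD (fun _ : ℂ => (0:ℝ)) x := by
        refine ⟨Eventually.of_forall fun y => differentiableAt_const 0, ?_, ?_⟩
        · have : (fderiv ℝ (fun _ : ℂ => (0:ℝ))) = fun _ => 0 :=
            funext fun y => fderiv_const_apply 0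
          rw [this]
          exact differentiableAt_const _
        · have : (fderiv ℝ (fun _ : ℂ => (0:ℝ))) = fun _ => 0 :=
            funext fun y => fderiv_const_apply 0
          rw [this, fderiv_const_apply]
          simp
      have := h0.sub hz'
      simpa using this
    apply main (fun w => -u w) hneg
      (fun ξ hξ => by simpa using (hbdry ξ hξ).neg)
      (fun w hw hlt => le_trans (neg_le_abs _) (hgr w hw hlt)) z hz
  linarith

end
end

section
/- For every compact set K ⊆ D there exists a constant c > 0 such that I_h(μ) ≥ c for every Borel probability measure μ with support contained in K. In particular W_h(K) > 0, so the h-capacity of every compact subset of D is finite. (Positivity of the Robin-type constant, inequality (2.8).) -/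
open MeasureTheory Filter Set
open scoped ENNReal Topology

noncomputable section

/-- The `h`-energy of a measure: `I_h(μ) = ∬ G(z,w)/(h(z)h(w)) dμ(z) dμ(w)`. -/
def hEnergy (μ : Measure ℂ) : ℝ≥0∞ :=
  ∫⁻ z, ∫⁻ w, greenFn z w / (ENNReal.ofReal (hker z) * ENNReal.ofReal (hker w)) ∂μ ∂μ

/-- `W_h(K)`: the infimum of `h`-energies of Borel probability measures supported in `K`. -/
def Wh (K : Set ℂ) : ℝ≥0∞ :=
  sInf { e : ℝ≥0∞ | ∃ μ : Measure ℂ, IsProbabilityMeasure μ ∧ μ Kᶜ = 0 ∧ e = hEnergy μ }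


/-- key identity -/
lemma normSq_identity (z w : ℂ) : Complex.normSq (1 - z * (starRingEnd ℂ) w) =
    Complex.normSq (z - w) + (1 - Complex.normSq z) * (1 - Complex.normSq w) := by
  simp [Complex.normSq_apply, Complex.mul_re, Complex.mul_im]; ring

/-- Green function lower bound on a compact ring. -/
lemma green_lower_s9 {R : ℝ} (hR1 : R < 1) {z w : ℂ}
    (hz : ‖z‖ ≤ R) (hw : ‖w‖ ≤ R) (hzw : z ≠ w) :
    Real.log (Real.sqrt (1 + ((1 - R^2)/2)^2)) ≤
      Real.log (‖1 - z * (starRingEnd ℂ) w‖ / ‖z - w‖) := by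
  have hR0 : 0 ≤ R := (norm_nonneg z).trans hz
  set δ : ℝ := 1 - R^2 with hδ
  have hδ0 : 0 < δ := by nlinarith
  set s : ℝ := Real.sqrt (1 + (δ/2)^2) with hs
  have hs2 : s^2 = 1 + (δ/2)^2 := Real.sq_sqrt (by positivity)
  have hs1 : 1 < s := by
    rw [hs]; exact (Real.lt_sqrt zero_le_one).mpr (by nlinarith)
  set a : ℝ := ‖z - w‖ with ha
  set b : ℝ := ‖1 - z * (starRingEnd ℂ) w‖ with hb
  have ha0 : 0 < a := by
    rw [ha]; simpa [sub_eq_zero] using hzw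
  have ha2 : a ≤ 2 := by
    have h := norm_sub_le_norm_sub_add_norm_sub z 0 w
    simp only [sub_zero, zero_sub, norm_neg] at h
    rw [ha]; linarith
  have hzδ : δ ≤ 1 - ‖z‖ ^ 2 := by nlinarith [norm_nonneg z]
  have hwδ : δ ≤ 1 - ‖w‖ ^ 2 := by nlinarith [norm_nonneg w]
  have hbsq : b^2 = a^2 + (1 - ‖z‖ ^ 2) * (1 - ‖w‖ ^ 2) := by
    rw [hb, ha, Complex.sq_norm, Complex.sq_norm, Complex.sq_norm, Complex.sq_norm,
      normSq_identity]
  have key : (a * s)^2 ≤ b^2 := by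
    have h1 : δ * δ ≤ (1 - ‖z‖ ^ 2) * (1 - ‖w‖ ^ 2) :=
      mul_le_mul hzδ hwδ hδ0.le (by nlinarith [norm_nonneg z])
    rw [hbsq]
    have heq : (a*s)^2 = a^2 + a^2 * (δ/2)^2 := by rw [mul_pow, hs2]; ring
    have haa : a^2 ≤ 4 := by nlinarith
    have h2 : a^2*(δ/2)^2 ≤ 4*(δ/2)^2 := mul_le_mul_of_nonneg_right haa (sq_nonneg _)
    have h3 : 4*((δ:ℝ)/2)^2 = δ*δ := by ring
    nlinarith [heq, h2, h3, h1]
  have hab : a * s ≤ b := by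
    have hb0 : 0 ≤ b := norm_nonneg _
    nlinarith [mul_pos ha0 (lt_trans one_pos hs1)]
  have hratio : s ≤ b / a := (le_div_iff₀ ha0).mpr (by linarith [hab, mul_comm a s])
  exact Real.log_le_log (by positivity) hratio

/-- Positivity of the Robin-type constant (inequality (2.8)): the `h`-energy of probability
measures on a compact `K ⊆ D` is bounded away from zero; hence `W_h(K) > 0` and the
`h`-capacity of every compact subset of `D` is finite. -/
theorem hEnergy_bounded_below (K : Set ℂ) (hK : IsCompact K) (hKD : K ⊆ puncDisk) :
    (∃ c : ℝ≥0∞, 0 < c ∧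
      ∀ μ : Measure ℂ, IsProbabilityMeasure μ → μ Kᶜ = 0 → c ≤ hEnergy μ) ∧
    0 < Wh K ∧ capH K ≠ ⊤ := by
  rcases K.eq_empty_or_nonempty with rfl | hne
  · refine ⟨⟨1, one_pos, fun μ hμ h0 => ?_⟩, ?_, ?_⟩
    · exfalso; simp at h0
    · rw [Wh]
      have : { e : ℝ≥0∞ | ∃ μ : Measure ℂ, IsProbabilityMeasure μ ∧ μ (∅ : Set ℂ)ᶜ = 0 ∧ e = hEnergy μ } = ∅ := by
        ext e; simp only [mem_setOf_eq, mem_empty_iff_false, iff_false]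
        rintro ⟨μ, hμ, h0, -⟩
        simp at h0
      rw [this, sInf_empty]; exact ENNReal.zero_lt_top
    · rw [capH]
      refine ne_top_of_le_ne_top (by simp : (0:ℝ≥0∞) ≠ ⊤) (sSup_le ?_)
      rintro m ⟨μ, -, -, -, rfl⟩; simp
  -- main case
  obtain ⟨zR, hzRK, hzRmax'⟩ := hK.exists_isMaxOn hne continuous_norm.continuousOn
  obtain ⟨zr, hzrK, hzrmin'⟩ := hK.exists_isMinOn hne continuous_norm.continuousOn
  have hzRmax : ∀ z ∈ K, ‖z‖ ≤ ‖zR‖ := fun z hz => hzRmax' hz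
  have hzrmin : ∀ z ∈ K, ‖zr‖ ≤ ‖z‖ := fun z hz => hzrmin' hz
  set R : ℝ := ‖zR‖ with hRdef
  set r : ℝ := ‖zr‖ with hrdef
  have hR1 : R < 1 := (hKD hzRK).1
  have hr0 : 0 < r := by
    have := (hKD hzrK).2
    simpa [hrdef, norm_pos_iff] using this
  have hrR : r ≤ R := hzRmax zr hzrK
  -- bounds on hker on K
  set H : ℝ := Real.log (1 / r) with hHdef
  have hH0 : 0 < H := Real.log_pos (by rw [lt_div_iff₀ hr0]; linarith)
  have hker_pos : ∀ z ∈ K, 0 < hker z := by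
    intro z hz
    have h1 : ‖z‖ < 1 := (hKD hz).1
    have h0 : 0 < ‖z‖ := by
      simpa [norm_pos_iff] using (hKD hz).2
    exact Real.log_pos (by rw [lt_div_iff₀ h0]; linarith)
  have hker_le : ∀ z ∈ K, hker z ≤ H := by
    intro z hz
    have h0 : 0 < ‖z‖ := by
      simpa [norm_pos_iff] using (hKD hz).2
    refine Real.log_le_log (by positivity) ?_
    exact one_div_le_one_div_of_le hr0 (hzrmin z hz)
  set g : ℝ := Real.log (Real.sqrt (1 + ((1 - R^2)/2)^2)) with hgdef
  have hg0 : 0 < g := by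
    refine Real.log_pos ?_
    refine (Real.lt_sqrt zero_le_one).mpr ?_
    have : 0 < 1 - R^2 := by nlinarith [(norm_nonneg zR)]
    nlinarith
  set c : ℝ≥0∞ := ENNReal.ofReal g / (ENNReal.ofReal H * ENNReal.ofReal H) with hcdef
  have hc0 : 0 < c := ENNReal.div_pos (by simpa using hg0) (by simp [ENNReal.mul_ne_top])
  have hcT : c ≠ ⊤ := by
    rw [hcdef]
    exact (ENNReal.div_lt_top (by simp) (by
      simp only [ne_eq, mul_eq_zero, not_or]
      constructor <;> simp [ENNReal.ofReal_eq_zero, not_le, hH0])).ne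
  -- pointwise bound
  have hpt : ∀ z ∈ K, ∀ w ∈ K,
      c ≤ greenFn z w / (ENNReal.ofReal (hker z) * ENNReal.ofReal (hker w)) := by
    intro z hz w hw
    by_cases hzw : z = w
    · rw [greenFn, if_pos hzw, ENNReal.top_div_of_ne_top (by simp [ENNReal.mul_ne_top])]
      exact le_top
    · rw [greenFn, if_neg hzw, hcdef]
      refine ENNReal.div_le_div (ENNReal.ofReal_le_ofReal ?_) ?_
      · exact green_lower_s9 hR1 (hzRmax z hz) (hzRmax w hw) hzw
      · exact mul_le_mul' (ENNReal.ofReal_le_ofReal (hker_le z hz))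
          (ENNReal.ofReal_le_ofReal (hker_le w hw))
  have hKm : MeasurableSet K := hK.measurableSet
  -- energy lower bound for measures supported on K
  have hlow : ∀ μ : Measure ℂ, μ Kᶜ = 0 → c * μ K * μ K ≤ hEnergy μ := by
    intro μ h0
    have inner : ∀ z ∈ K, c * μ K ≤
        ∫⁻ w, greenFn z w / (ENNReal.ofReal (hker z) * ENNReal.ofReal (hker w)) ∂μ := by
      intro z hz
      calc c * μ K = ∫⁻ w, K.indicator (fun _ => c) w ∂μ := (lintegral_indicator_const hKm c).symm
      _ ≤ _ := by
        refine lintegral_mono fun w => ?_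
        by_cases hw : w ∈ K
        · rw [indicator_of_mem hw]; exact hpt z hz w hw
        · rw [indicator_of_notMem hw]; exact zero_le
    calc c * μ K * μ K = (c * μ K) * μ K := rfl
    _ = ∫⁻ z, K.indicator (fun _ => c * μ K) z ∂μ := (lintegral_indicator_const hKm _).symm
    _ ≤ hEnergy μ := by
      rw [hEnergy]
      refine lintegral_mono fun z => ?_
      by_cases hz : z ∈ K
      · rw [indicator_of_mem hz]; exact inner z hz
      · rw [indicator_of_notMem hz]; exact zero_le
  have hKuniv : ∀ μ : Measure ℂ, μ Kᶜ = 0 → μ K = μ univ := by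
    intro μ h0
    refine le_antisymm (measure_mono (subset_univ K)) ?_
    calc μ univ = μ (K ∪ Kᶜ) := by rw [union_compl_self]
    _ ≤ μ K + μ Kᶜ := measure_union_le _ _
    _ = μ K := by rw [h0, add_zero]
  refine ⟨⟨c, hc0, fun μ hμ h0 => ?_⟩, ?_, ?_⟩
  · have h1 : μ K = 1 := by rw [hKuniv μ h0]; exact measure_univ
    have := hlow μ h0
    rwa [h1, mul_one, mul_one] at this
  · refine lt_of_lt_of_le hc0 (le_sInf ?_)
    rintro e ⟨μ, hμ, h0, rfl⟩
    have h1 : μ K = 1 := by rw [hKuniv μ h0]; exact measure_univ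
    have := hlow μ h0
    rwa [h1, mul_one, mul_one] at this
  · -- capacity bound
    refine ne_top_of_le_ne_top (ENNReal.inv_ne_top.mpr hc0.ne') (sSup_le ?_)
    rintro m ⟨μ, hfin, h0, hpot, rfl⟩
    -- upper bound: hEnergy μ ≤ μ K
    have hup : hEnergy μ ≤ μ K := by
      have hae : ∀ᵐ z ∂μ, z ∈ K := by
        rw [ae_iff]; exact h0
      have step : ∀ z ∈ K,
          (∫⁻ w, greenFn z w / (ENNReal.ofReal (hker z) * ENNReal.ofReal (hker w)) ∂μ) ≤ 1 := by
        intro z hz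
        set A : ℝ≥0∞ := ENNReal.ofReal (hker z) with hA
        have hA0 : A ≠ 0 := by simp [hA, ENNReal.ofReal_eq_zero, not_le, hker_pos z hz]
        have hAT : A ≠ ⊤ := ENNReal.ofReal_ne_top
        have heq : (∫⁻ w, greenFn z w / (A * ENNReal.ofReal (hker w)) ∂μ)
            = A⁻¹ * hPotential μ z := by
          rw [hPotential, ← lintegral_const_mul' _ _ (ENNReal.inv_ne_top.mpr hA0)]
          refine lintegral_congr fun w => ?_
          rw [div_eq_mul_inv, div_eq_mul_inv,
            ENNReal.mul_inv (Or.inr ENNReal.ofReal_ne_top) (Or.inl hAT)]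
          ring
        rw [heq]
        calc A⁻¹ * hPotential μ z ≤ A⁻¹ * A :=
          mul_le_mul_right (hpot z (hKD hz)) _
        _ = 1 := ENNReal.inv_mul_cancel hA0 hAT
      calc hEnergy μ ≤ ∫⁻ _, 1 ∂μ := by
            rw [hEnergy]
            refine lintegral_mono_ae ?_
            filter_upwards [hae] with z hz using step z hz
      _ = μ univ := by simp
      _ = μ K := (hKuniv μ h0).symm
    have hchain : c * μ K * μ K ≤ 1 * μ K := by
      rw [one_mul]; exact (hlow μ h0).trans hup
    by_cases hK0 : μ K = 0
    · rw [hK0]; exact zero_le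
    · have hKT : μ K ≠ ⊤ := measure_ne_top μ K
      have : c * μ K ≤ 1 := (ENNReal.mul_le_mul_iff_left hK0 hKT).mp hchain
      rw [mul_comm] at this
      exact ENNReal.le_inv_iff_mul_le.mpr this


end
end

section
/- (Lemma 2.2(2) for the Laplacian.) The h-capacity is continuous along monotone sequences of compact sets with compact limit: (a) if (K_n) is a decreasing sequence of compact subsets of D with K = ⋂_n K_n, then lim_{n→∞} C_h(K_n) = C_h(K); (b) if (K_n) is an increasing sequence of compact subsets of D whose union K = ⋃_n K_n is itself a compact subset of D, then lim_{n→∞} C_h(K_n) = C_h(K). -/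
open MeasureTheory Filter Set
open scoped ENNReal Topology

noncomputable section

private lemma min_add_aux (a b c : ℝ≥0∞) : min a (b + c) ≤ min a b + c := by
  rcases le_total a b with h | h
  · rw [min_eq_left h]
    exact le_add_of_le_of_nonneg (min_le_left _ _) zero_le
  · rw [min_eq_right h]
    exact min_le_right _ _

private lemma SL1 (a ε : ℝ≥0∞) (N : ℕ) :
    min a ((N : ℝ≥0∞) * ε) ≤
      ε * ∑ i ∈ Finset.range N, (if (i : ℝ≥0∞) * ε < a then (1 : ℝ≥0∞) else 0) := by
  induction N with
  | zero => simp
  | succ N ih =>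
    rw [Finset.sum_range_succ, mul_add]
    have hcast : ((N + 1 : ℕ) : ℝ≥0∞) * ε = (N : ℝ≥0∞) * ε + ε := by
      push_cast; ring
    rw [hcast]
    by_cases hl : (N : ℝ≥0∞) * ε < a
    · rw [if_pos hl, mul_one]
      exact le_trans (min_add_aux _ _ _) (add_le_add_left ih _)
    · rw [if_neg hl, mul_zero, add_zero]
      have ha : a ≤ (N : ℝ≥0∞) * ε := not_lt.mp hl
      calc min a ((N : ℝ≥0∞) * ε + ε) ≤ a := min_le_left _ _
        _ = min a ((N : ℝ≥0∞) * ε) := (min_eq_left ha).symm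
        _ ≤ _ := ih

private lemma SL2 (a ε : ℝ≥0∞) (N : ℕ) :
    ε * ∑ i ∈ Finset.range N, (if (i : ℝ≥0∞) * ε < a then (1 : ℝ≥0∞) else 0) ≤ a + ε := by
  have hSle : ∀ M : ℕ,
      (∑ i ∈ Finset.range M, (if (i : ℝ≥0∞) * ε < a then (1 : ℝ≥0∞) else 0)) ≤ (M : ℝ≥0∞) := by
    intro M
    calc (∑ i ∈ Finset.range M, (if (i : ℝ≥0∞) * ε < a then (1 : ℝ≥0∞) else 0))
        ≤ ∑ _i ∈ Finset.range M, (1 : ℝ≥0∞) := by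
          refine Finset.sum_le_sum fun i _ => ?_
          split <;> simp
      _ = (M : ℝ≥0∞) := by simp
  induction N with
  | zero => simp
  | succ N ih =>
    rw [Finset.sum_range_succ, mul_add]
    by_cases hl : (N : ℝ≥0∞) * ε < a
    · rw [if_pos hl, mul_one]
      refine add_le_add_left ?_ ε
      calc ε * ∑ i ∈ Finset.range N, (if (i : ℝ≥0∞) * ε < a then (1 : ℝ≥0∞) else 0)
          ≤ ε * (N : ℝ≥0∞) := mul_le_mul_right (hSle N) ε
        _ = (N : ℝ≥0∞) * ε := mul_comm _ _
        _ ≤ a := hl.le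
    · rw [if_neg hl, mul_zero, add_zero]
      exact ih

/-- Key limit lemma: if `μ` is dominated on open sets by the ultrafilter limit of measures `ν n`
of fixed total mass `r'`, then the integral of a bounded continuous `ℝ≥0∞`-valued function
against `μ` is at most any common bound for the integrals against the `ν n`. -/
private lemma keyP {𝒰 : Ultrafilter ℕ} {ν : ℕ → Measure ℂ} {μ : Measure ℂ} {F : Set ℂ → ℝ≥0∞}
    {g : ℂ → ℝ≥0∞} {B C r' : ℝ≥0∞}
    (hev : ∀ s : Set ℂ, Tendsto (fun n => ν n s) 𝒰 (𝓝 (F s)))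
    (hμF : ∀ U : Set ℂ, IsOpen U → μ U ≤ F U)
    (hgc : Continuous g) (hB : ∀ w, g w ≤ B) (hBt : B ≠ ⊤)
    (hmass : ∀ n, ν n Set.univ = r') (hr't : r' ≠ ⊤)
    (hC : ∀ n, ∫⁻ w, g w ∂(ν n) ≤ C) (hCt : C ≠ ⊤) :
    ∫⁻ w, g w ∂μ ≤ C := by
  have main : ∀ (N : ℕ) (ε : ℝ≥0∞), ε ≠ ⊤ → B ≤ (N : ℝ≥0∞) * ε →
      ∫⁻ w, g w ∂μ ≤ C + ε * r' := by
    intro N ε hεt hNB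
    set U : ℕ → Set ℂ := fun i => {w | (i : ℝ≥0∞) * ε < g w} with hU
    have hUopen : ∀ i, IsOpen (U i) := fun i => isOpen_lt continuous_const hgc
    have hUmeas : ∀ i, MeasurableSet (U i) := fun i => (hUopen i).measurableSet
    set S : ℂ → ℝ≥0∞ := fun w =>
      ∑ i ∈ Finset.range N, (U i).indicator (fun _ => (1 : ℝ≥0∞)) w with hS
    have hSeq : ∀ w, S w =
        ∑ i ∈ Finset.range N, (if (i : ℝ≥0∞) * ε < g w then (1 : ℝ≥0∞) else 0) := by
      intro w
      refine Finset.sum_congr rfl fun i _ => ?_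
      simp [Set.indicator_apply, hU, Set.mem_setOf_eq]
    have hSmeas : Measurable S := by
      refine Finset.measurable_sum _ fun i _ => ?_
      exact (measurable_const.indicator (hUmeas i))
    have pt_low : ∀ w, g w ≤ ε * S w := by
      intro w
      rw [hSeq w]
      have := SL1 (g w) ε N
      rwa [min_eq_left ((hB w).trans hNB)] at this
    have pt_up : ∀ w, ε * S w ≤ g w + ε := by
      intro w
      rw [hSeq w]
      exact SL2 (g w) ε N
    have hint : ∀ (κ : Measure ℂ), ∫⁻ w, ε * S w ∂κ = ε * ∑ i ∈ Finset.range N, κ (U i) := by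
      intro κ
      rw [lintegral_const_mul ε hSmeas]
      congr 1
      rw [lintegral_finset_sum _ fun i _ => measurable_const.indicator (hUmeas i)]
      exact Finset.sum_congr rfl fun i _ => lintegral_indicator_one (hUmeas i)
    have step1 : ∫⁻ w, g w ∂μ ≤ ε * ∑ i ∈ Finset.range N, μ (U i) := by
      rw [← hint μ]; exact lintegral_mono pt_low
    have step2 : (ε * ∑ i ∈ Finset.range N, F (U i)) ≤ C + ε * r' := by
      have htend : Tendsto (fun n => ε * ∑ i ∈ Finset.range N, ν n (U i)) 𝒰
          (𝓝 (ε * ∑ i ∈ Finset.range N, F (U i))) := by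
        refine ENNReal.Tendsto.const_mul ?_ (Or.inr hεt)
        exact tendsto_finset_sum _ fun i _ => hev (U i)
      refine le_of_tendsto htend (Eventually.of_forall fun n => ?_)
      calc ε * ∑ i ∈ Finset.range N, (ν n) (U i) = ∫⁻ w, ε * S w ∂(ν n) := (hint (ν n)).symm
        _ ≤ ∫⁻ w, (g w + ε) ∂(ν n) := lintegral_mono pt_up
        _ = (∫⁻ w, g w ∂(ν n)) + ε * (ν n) Set.univ := by
            rw [lintegral_add_right _ measurable_const, lintegral_const]
        _ ≤ C + ε * r' := by rw [hmass n]; exact add_le_add_left (hC n) _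
    calc ∫⁻ w, g w ∂μ ≤ ε * ∑ i ∈ Finset.range N, μ (U i) := step1
      _ ≤ ε * ∑ i ∈ Finset.range N, F (U i) :=
          mul_le_mul_right (Finset.sum_le_sum fun i _ => hμF (U i) (hUopen i)) ε
      _ ≤ C + ε * r' := step2
  refine ENNReal.le_of_forall_pos_le_add fun δ hδ _ => ?_
  by_cases hr0 : r' = 0
  · have := main 1 (B + 1) (by simp [hBt]) (by simp)
    rw [hr0, mul_zero, add_zero] at this
    exact this.trans (le_add_of_le_of_nonneg le_rfl zero_le)
  · set ε : ℝ≥0∞ := (δ : ℝ≥0∞) / r' with hε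
    have hε0 : ε ≠ 0 := by
      simp only [hε, ne_eq, ENNReal.div_eq_zero_iff, not_or]
      exact ⟨by exact_mod_cast hδ.ne', hr't⟩
    have hεt : ε ≠ ⊤ := by
      simp [hε, ENNReal.div_eq_top, hr0, ENNReal.coe_ne_top]
    have hdivt : B / ε ≠ ⊤ := by
      simp [ENNReal.div_eq_top, hε0, hBt]
    obtain ⟨N, hN⟩ := ENNReal.exists_nat_gt hdivt
    have hNB : B ≤ (N : ℝ≥0∞) * ε := (ENNReal.div_le_iff hε0 hεt).mp hN.le
    have hεr : ε * r' ≤ (δ : ℝ≥0∞) := by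
      rw [hε, ENNReal.div_mul_cancel hr0 hr't]
    exact (main N ε hεt hNB).trans (add_le_add_right hεr C)

lemma isOpen_puncDisk : IsOpen puncDisk := by
  have h1 : IsOpen unitDisk := isOpen_lt continuous_norm continuous_const
  exact h1.sdiff isClosed_singleton

lemma hker_pos {w : ℂ} (hw : w ∈ puncDisk) : 0 < hker w := by
  have h0 : 0 < ‖w‖ := norm_pos_iff.mpr (by simpa using hw.2)
  have h1 : ‖w‖ < 1 := hw.1
  exact Real.log_pos ((lt_div_iff₀ h0).mpr (by rwa [one_mul]))

lemma hker_contAt {w₀ : ℂ} (hw : w₀ ≠ 0) : ContinuousAt hker w₀ := by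
  have habs : ‖w₀‖ ≠ 0 := norm_ne_zero_iff.mpr hw
  have h1 : ContinuousAt (fun w : ℂ => 1 / ‖w‖) w₀ :=
    continuousAt_const.div continuous_norm.continuousAt habs
  have h2 := ContinuousAt.comp (f := fun w : ℂ => 1 / ‖w‖) (x := w₀)
    (Real.continuousAt_log (one_div_ne_zero habs)) h1
  exact h2

lemma num_ne_zero {z w : ℂ} (hz : ‖z‖ < 1) (hw : ‖w‖ < 1) :
    1 - z * (starRingEnd ℂ) w ≠ 0 := by
  intro h
  have h1 : z * (starRingEnd ℂ) w = 1 := by linear_combination -h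
  have := congrArg (‖·‖) h1
  rw [norm_mul, Complex.norm_conj, norm_one] at this
  nlinarith [norm_nonneg z, norm_nonneg w]

lemma green_contAt {z w₀ : ℂ} (hz : ‖z‖ < 1) (hw : ‖w₀‖ < 1)
    (hne : w₀ ≠ z) : ContinuousAt (greenFn z) w₀ := by
  have hsub : z - w₀ ≠ 0 := sub_ne_zero.mpr (Ne.symm hne)
  have hRc : ContinuousAt
      (fun w => ‖1 - z * (starRingEnd ℂ) w‖ / ‖z - w‖) w₀ := by
    apply ContinuousAt.div
    · exact (continuous_norm.comp
        (continuous_const.sub (continuous_const.mul continuous_star))).continuousAt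
    · exact (continuous_norm.comp (continuous_const.sub continuous_id)).continuousAt
    · exact norm_ne_zero_iff.mpr hsub
  have hRpos : 0 < ‖1 - z * (starRingEnd ℂ) w₀‖ / ‖z - w₀‖ :=
    div_pos (norm_pos_iff.mpr (num_ne_zero hz hw)) (norm_pos_iff.mpr hsub)
  have hcont : ContinuousAt (fun w =>
      ENNReal.ofReal (Real.log (‖1 - z * (starRingEnd ℂ) w‖ / ‖z - w‖))) w₀ :=
    by
      have h3 := ContinuousAt.comp
        (f := fun w => ‖1 - z * (starRingEnd ℂ) w‖ / ‖z - w‖) (x := w₀)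
        (Real.continuousAt_log hRpos.ne') hRc
      have h4 := ContinuousAt.comp
        (f := fun w => Real.log (‖1 - z * (starRingEnd ℂ) w‖ / ‖z - w‖))
        (x := w₀) ENNReal.continuous_ofReal.continuousAt h3
      exact h4
  refine hcont.congr ?_
  filter_upwards [isOpen_ne.mem_nhds hne] with w hw'
  rw [greenFn, if_neg (fun h => hw' h.symm)]

lemma green_tendsto_top {z : ℂ} (hz : ‖z‖ < 1) :
    Tendsto (fun w => ‖1 - z * (starRingEnd ℂ) w‖ / ‖z - w‖)
      (𝓝[≠] z) atTop := by
  have hnum : Tendsto (fun w => ‖1 - z * (starRingEnd ℂ) w‖) (𝓝[≠] z)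
      (𝓝 (‖1 - z * (starRingEnd ℂ) z‖)) :=
    ((continuous_norm.comp
      (continuous_const.sub (continuous_const.mul continuous_star))).continuousAt).mono_left
      nhdsWithin_le_nhds
  have hnumpos : 0 < ‖1 - z * (starRingEnd ℂ) z‖ :=
    norm_pos_iff.mpr (num_ne_zero hz hz)
  have hden : Tendsto (fun w => ‖z - w‖) (𝓝[≠] z) (𝓝[>] 0) := by
    rw [tendsto_nhdsWithin_iff]
    constructor
    · have : Tendsto (fun w => ‖z - w‖) (𝓝 z) (𝓝 (‖z - z‖)) :=
        (continuous_norm.comp (continuous_const.sub continuous_id)).continuousAt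
      simpa using this.mono_left nhdsWithin_le_nhds
    · filter_upwards [eventually_mem_nhdsWithin] with w hw
      exact norm_pos_iff.mpr (sub_ne_zero.mpr fun h => hw h.symm)
  have hinv : Tendsto (fun w => (‖z - w‖)⁻¹) (𝓝[≠] z) atTop :=
    tendsto_inv_nhdsGT_zero.comp hden
  have := Filter.Tendsto.pos_mul_atTop hnumpos hnum hinv
  refine this.congr fun w => ?_
  rw [div_eq_mul_inv]

lemma min_green_eventually {z : ℂ} (hz : ‖z‖ < 1) (k : ℕ) :
    (fun w => min (greenFn z w) (k : ℝ≥0∞)) =ᶠ[𝓝 z] fun _ => (k : ℝ≥0∞) := by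
  have h1 : ∀ᶠ w in 𝓝[≠] z, (k : ℝ) ≤ Real.log
      (‖1 - z * (starRingEnd ℂ) w‖ / ‖z - w‖) :=
    (Real.tendsto_log_atTop.comp (green_tendsto_top hz)).eventually_ge_atTop _
  have h2 : ∀ᶠ w in 𝓝[≠] z, min (greenFn z w) (k : ℝ≥0∞) = (k : ℝ≥0∞) := by
    filter_upwards [h1, eventually_mem_nhdsWithin] with w hw hw'
    have hne : ¬ z = w := fun h => hw' h.symm
    rw [greenFn, if_neg hne]
    refine min_eq_right ?_
    rw [← ENNReal.ofReal_natCast]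
    exact ENNReal.ofReal_le_ofReal hw
  rw [eventually_nhdsWithin_iff] at h2
  filter_upwards [h2] with w hw
  by_cases hwz : w = z
  · subst hwz
    rw [greenFn, if_pos rfl]
    exact min_eq_right le_top
  · exact hw hwz

lemma sup_min_nat (a : ℝ≥0∞) : ⨆ k : ℕ, min a (k : ℝ≥0∞) = a := by
  refine le_antisymm (iSup_le fun k => min_le_left _ _) ?_
  rcases eq_or_ne a ⊤ with rfl | ha
  · have h : ∀ k : ℕ, min (⊤ : ℝ≥0∞) (k : ℝ≥0∞) = (k : ℝ≥0∞) := fun k => min_eq_right le_top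
    simp only [h, ENNReal.iSup_natCast, le_refl]
  · obtain ⟨k, hk⟩ := ENNReal.exists_nat_gt ha
    calc a = min a (k : ℝ≥0∞) := (min_eq_left hk.le).symm
      _ ≤ ⨆ k : ℕ, min a (k : ℝ≥0∞) := le_iSup (fun k : ℕ => min a (k : ℝ≥0∞)) k

section cutoff

variable {L : Set ℂ} (hLc : IsCompact L) (hLsub : L ⊆ puncDisk)
  {φ : C(ℂ, ℝ)} (hφ0 : EqOn φ 0 (interior L)ᶜ) (hφ01 : ∀ x, φ x ∈ Icc (0:ℝ) 1)

lemma m_ne_top (w : ℂ) (hw : 0 < hker w ∨ φ w = 0) :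
    ENNReal.ofReal (φ w) / ENNReal.ofReal (hker w) ≠ ⊤ := by
  rcases hw with hw | hw
  · simp [ENNReal.div_eq_top, ENNReal.ofReal_ne_top, (ENNReal.ofReal_pos.mpr hw).ne']
  · simp [hw]

include hLc hLsub hφ0 in
lemma m_cont : Continuous (fun w => ENNReal.ofReal (φ w) / ENNReal.ofReal (hker w)) := by
  rw [continuous_iff_continuousAt]
  intro w₀
  by_cases hw₀ : w₀ ∈ puncDisk
  · have hkpos : 0 < hker w₀ := hker_pos hw₀
    have hkc : ContinuousAt hker w₀ := hker_contAt (by simpa using hw₀.2)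
    have ha : ContinuousAt (fun w => ENNReal.ofReal (φ w)) w₀ :=
      ENNReal.continuous_ofReal.continuousAt.comp φ.continuous.continuousAt
    have hb : ContinuousAt (fun w => (ENNReal.ofReal (hker w))⁻¹) w₀ :=
      continuous_inv.continuousAt.comp (ENNReal.continuous_ofReal.continuousAt.comp hkc)
    have hbne : (ENNReal.ofReal (hker w₀))⁻¹ ≠ ⊤ :=
      ENNReal.inv_ne_top.mpr (ENNReal.ofReal_pos.mpr hkpos).ne'
    have := ENNReal.Tendsto.mul ha (Or.inr hbne) hb (Or.inr ENNReal.ofReal_ne_top)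
    simpa only [ContinuousAt, div_eq_mul_inv] using this
  · have hw₀L : w₀ ∈ Lᶜ := fun h => hw₀ (hLsub h)
    have hev : (fun w => ENNReal.ofReal (φ w) / ENNReal.ofReal (hker w)) =ᶠ[𝓝 w₀]
        (fun _ => (0 : ℝ≥0∞)) := by
      filter_upwards [hLc.isClosed.isOpen_compl.mem_nhds hw₀L] with w hw
      have : φ w = 0 := hφ0 (fun hint => hw (interior_subset hint))
      simp [this]
    rw [continuousAt_congr hev]
    exact continuousAt_const

include hLc hLsub hφ0 hφ01 in
lemma g_cont {z : ℂ} (hz : z ∈ puncDisk) (k : ℕ) :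
    Continuous (fun w =>
      min (greenFn z w) (k : ℝ≥0∞) * (ENNReal.ofReal (φ w) / ENNReal.ofReal (hker w))) := by
  have hm := m_cont hLc hLsub hφ0 (φ := φ)
  rw [continuous_iff_continuousAt]
  intro w₀
  by_cases hw₀L : w₀ ∈ L
  · by_cases hw₀z : w₀ = z
    · subst hw₀z
      have hev := (min_green_eventually hz.1 k).mul
        (EventuallyEq.rfl (f := fun w => ENNReal.ofReal (φ w) / ENNReal.ofReal (hker w)))
      refine (continuousAt_congr hev).mpr ?_
      exact (ENNReal.Tendsto.const_mul hm.continuousAt (Or.inr (ENNReal.natCast_ne_top k)))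
    · have hamin : ContinuousAt (fun w => min (greenFn z w) (k : ℝ≥0∞)) w₀ :=
        (green_contAt hz.1 (hLsub hw₀L).1 hw₀z).min continuousAt_const
      have hane : min (greenFn z w₀) (k : ℝ≥0∞) ≠ ⊤ :=
        ne_top_of_le_ne_top (ENNReal.natCast_ne_top k) (min_le_right _ _)
      have hbne : ENNReal.ofReal (φ w₀) / ENNReal.ofReal (hker w₀) ≠ ⊤ :=
        m_ne_top _ (Or.inl (hker_pos (hLsub hw₀L)))
      exact ENNReal.Tendsto.mul hamin (Or.inr hbne) hm.continuousAt (Or.inr hane)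
  · have hev : (fun w =>
        min (greenFn z w) (k : ℝ≥0∞) * (ENNReal.ofReal (φ w) / ENNReal.ofReal (hker w)))
        =ᶠ[𝓝 w₀] (fun _ => (0 : ℝ≥0∞)) := by
      filter_upwards [hLc.isClosed.isOpen_compl.mem_nhds hw₀L] with w hw
      have : φ w = 0 := hφ0 (fun hint => hw (interior_subset hint))
      simp [this]
    rw [continuousAt_congr hev]
    exact continuousAt_const

end cutoff

lemma capH_iUnion (K : ℕ → Set ℂ) (hcpt : ∀ n, IsCompact (K n)) (hmono : ∀ n, K n ⊆ K (n + 1)) :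
    capH (⋃ n, K n) = ⨆ n, capH (K n) := by
  refine le_antisymm ?_ (iSup_le fun n => capH_mono (subset_iUnion K n))
  apply sSup_le
  rintro m ⟨μ, hfin, hnull, hpot, rfl⟩
  have hKm : Monotone K := monotone_nat_of_le_succ hmono
  rw [hKm.directed_le.measure_iUnion]
  refine iSup_le fun n => ?_
  refine le_trans ?_ (le_iSup (fun n => capH (K n)) n)
  have hmeas : MeasurableSet (K n) := (hcpt n).isClosed.measurableSet
  haveI := hfin
  refine le_sSup ⟨μ.restrict (K n), inferInstance, ?_, ?_, ?_⟩
  · rw [Measure.restrict_apply hmeas.compl, compl_inter_self]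
    exact measure_empty
  · intro z hz
    exact le_trans (lintegral_mono' Measure.restrict_le_self le_rfl) (hpot z hz)
  · rw [Measure.restrict_apply_self]

lemma iInf_le_capH_iInter (K : ℕ → Set ℂ) (hcpt : ∀ n, IsCompact (K n))
    (hsub : ∀ n, K n ⊆ puncDisk) (hdec : ∀ n, K (n + 1) ⊆ K n) :
    ⨅ n, capH (K n) ≤ capH (⋂ n, K n) := by
  set Kinf := ⋂ n, K n with hKinf
  refine le_of_forall_lt fun r hr => ?_
  obtain ⟨r', hrr', hr'⟩ := exists_between hr
  refine lt_of_lt_of_le hrr' ?_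
  have hr'0 : 0 < r' := lt_of_le_of_lt zero_le hrr'
  have hr't : r' ≠ ⊤ := hr'.ne_top
  have hKanti : Antitone K := antitone_nat_of_succ_le hdec
  have hKmeas : ∀ n, MeasurableSet (K n) := fun n => (hcpt n).isClosed.measurableSet
  -- choose near-optimal admissible measures
  have hch : ∀ n, ∃ μ : Measure ℂ, IsFiniteMeasure μ ∧ μ (K n)ᶜ = 0 ∧
      (∀ z ∈ puncDisk, hPotential μ z ≤ ENNReal.ofReal (hker z)) ∧ r' < μ (K n) := by
    intro n
    have h1 : r' < capH (K n) := lt_of_lt_of_le hr' (iInf_le _ n)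
    rw [capH, lt_sSup_iff] at h1
    obtain ⟨m, ⟨μ, h2, h3, h4, rfl⟩, hm⟩ := h1
    exact ⟨μ, h2, h3, h4, hm⟩
  choose μs hfin hnull hpot hmass using hch
  have huniv : ∀ n, μs n Set.univ = μs n (K n) := fun n => by
    rw [← measure_add_measure_compl (hKmeas n), hnull n, add_zero]
  have hunivpos : ∀ n, r' < μs n Set.univ := fun n => (huniv n) ▸ hmass n
  have hunivne : ∀ n, μs n Set.univ ≠ 0 := fun n => (hr'0.trans (hunivpos n)).ne'
  have hunivnt : ∀ n, μs n Set.univ ≠ ⊤ := fun n => (haveI := hfin n; measure_ne_top (μs n) _)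
  -- normalized measures of total mass r'
  set ν : ℕ → Measure ℂ := fun n => (r' / μs n Set.univ) • μs n with hν
  have hν_apply : ∀ n s, ν n s = (r' / μs n Set.univ) * μs n s := fun n s => by
    rw [hν]; simp [Measure.smul_apply, smul_eq_mul]
  have hν_univ : ∀ n, ν n Set.univ = r' := fun n => by
    rw [hν_apply]; exact ENNReal.div_mul_cancel (hunivne n) (hunivnt n)
  have hc_le_one : ∀ n, r' / μs n Set.univ ≤ 1 :=
    fun n => ENNReal.div_le_of_le_mul (by rw [one_mul]; exact (hunivpos n).le)
  have hν_nullK : ∀ n m, m ≤ n → ν n ((K m)ᶜ) = 0 := by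
    intro n m hmn
    have h2 : μs n ((K m)ᶜ) = 0 :=
      measure_mono_null (compl_subset_compl.mpr (hKanti hmn)) (hnull n)
    rw [hν_apply, h2, mul_zero]
  have hν_pot : ∀ n, ∀ z ∈ puncDisk, hPotential (ν n) z ≤ ENNReal.ofReal (hker z) := by
    intro n z hz
    rw [hPotential, hν, lintegral_smul_measure]
    calc (r' / μs n Set.univ) * ∫⁻ w, greenFn z w / ENNReal.ofReal (hker w) ∂(μs n)
        ≤ 1 * ∫⁻ w, greenFn z w / ENNReal.ofReal (hker w) ∂(μs n) :=
          mul_le_mul_left (hc_le_one n) _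
      _ = hPotential (μs n) z := by rw [one_mul]; rfl
      _ ≤ ENNReal.ofReal (hker z) := hpot n z hz
  -- ultrafilter limit of the measures, as a point of a compact product space
  set 𝒰 : Ultrafilter ℕ := Ultrafilter.of atTop with h𝒰
  have h𝒰le : (𝒰 : Filter ℕ) ≤ atTop := Ultrafilter.of_le atTop
  obtain ⟨F, -, hF⟩ := isCompact_univ.ultrafilter_le_nhds
    (𝒰.map fun n => (fun s : Set ℂ => ν n s)) (by simp [le_principal_iff])
  rw [Ultrafilter.coe_map] at hF
  have hF' : Tendsto (fun n => (fun s : Set ℂ => ν n s)) 𝒰 (𝓝 F) := hF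
  have hev : ∀ s : Set ℂ, Tendsto (fun n => ν n s) 𝒰 (𝓝 (F s)) :=
    fun s => tendsto_pi_nhds.mp hF' s
  -- basic facts about F
  have hFle : ∀ s, F s ≤ r' := fun s =>
    le_of_tendsto (hev s) (Eventually.of_forall fun n =>
      (hν_univ n) ▸ measure_mono (subset_univ s))
  have hFuniv : F Set.univ = r' := by
    have h1 : (fun n => ν n Set.univ) = fun _ => r' := funext hν_univ
    exact tendsto_nhds_unique (hev Set.univ) (h1 ▸ tendsto_const_nhds)
  have hFmono : ∀ s t : Set ℂ, s ⊆ t → F s ≤ F t := fun s t h =>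
    le_of_tendsto_of_tendsto' (hev s) (hev t) fun n => measure_mono h
  have hFK0 : ∀ U : Set ℂ, IsOpen U → K 0 ⊆ U → F U = r' := by
    intro U hUo hK0U
    have h1 : ∀ n, ν n U = r' := by
      intro n
      have h2 : ν n (Uᶜ) = 0 :=
        measure_mono_null (compl_subset_compl.mpr hK0U) (hν_nullK n 0 (Nat.zero_le n))
      have h3 := measure_add_measure_compl (μ := ν n) hUo.measurableSet
      rw [h2, add_zero] at h3
      rw [h3, hν_univ]
    exact tendsto_nhds_unique (hev U) ((funext h1 : (fun n => ν n U) = _) ▸ tendsto_const_nhds)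
  have hF0 : ∀ N, F ((K N)ᶜ) = 0 := by
    intro N
    have h1 : ∀ᶠ n in atTop, ν n ((K N)ᶜ) = 0 := eventually_atTop.mpr ⟨N, fun n hn => hν_nullK n N hn⟩
    have h2 : ∀ᶠ n in (𝒰 : Filter ℕ), ν n ((K N)ᶜ) = 0 := h𝒰le h1
    refine tendsto_nhds_unique (hev _) (Tendsto.congr' ?_ tendsto_const_nhds)
    filter_upwards [h2] with n hn
    exact hn.symm
  have hFadd : ∀ s t : Set ℂ, F (s ∪ t) ≤ F s + F t := fun s t =>
    le_of_tendsto_of_tendsto' (hev (s ∪ t)) ((hev s).add (hev t)) fun n => measure_union_le _ _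
  have hFsuper : ∀ s t : Set ℂ, MeasurableSet t → Disjoint s t → F s + F t ≤ F (s ∪ t) :=
    fun s t ht hd => le_of_tendsto_of_tendsto' ((hev s).add (hev t)) (hev (s ∪ t))
      fun n => (measure_union hd ht).ge
  -- the inner regularization of F on arbitrary sets
  set G0 : Set ℂ → ℝ≥0∞ := fun A => ⨅ U : {U : Set ℂ // IsOpen U ∧ A ⊆ U}, F U.1 with hG0
  have hG0le : ∀ (A U : Set ℂ), IsOpen U → A ⊆ U → G0 A ≤ F U := fun A U h1 h2 =>
    iInf_le (fun U : {U : Set ℂ // IsOpen U ∧ A ⊆ U} => F U.1) ⟨U, h1, h2⟩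
  have hG0r' : ∀ A, G0 A ≤ r' := fun A =>
    (hG0le A Set.univ isOpen_univ (subset_univ A)).trans (hFle _)
  have hG0t : ∀ A, G0 A ≠ ⊤ := fun A => ((hG0r' A).trans_lt hr't.lt_top).ne
  have hG0mono : ∀ A B : Set ℂ, A ⊆ B → G0 A ≤ G0 B := fun A B hAB =>
    le_iInf fun U => hG0le A U.1 U.2.1 (hAB.trans U.2.2)
  have hG0K0 : G0 (K 0) = r' := by
    refine le_antisymm (hG0r' _) (le_iInf fun U => ?_)
    exact (hFK0 U.1 U.2.1 U.2.2).ge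
  have hG0zero : ∀ C : Set ℂ, (∃ N, C ⊆ (K N)ᶜ) → G0 C = 0 := by
    rintro C ⟨N, hN⟩
    refine le_antisymm ?_ zero_le
    rw [← hF0 N]
    exact hG0le C ((K N)ᶜ) (hcpt N).isClosed.isOpen_compl hN
  have hG0key : ∀ (A : Set ℂ) (ε : ℝ≥0∞), ε ≠ 0 → ∃ U : Set ℂ, IsOpen U ∧ A ⊆ U ∧
      F U ≤ G0 A + ε := by
    intro A ε hε
    have hlt : G0 A < G0 A + ε := ENNReal.lt_add_right (hG0t A) hε
    rw [hG0] at hlt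
    obtain ⟨U, hU⟩ := iInf_lt_iff.mp (show G0 A < G0 A + ε from hlt)
    exact ⟨U.1, U.2.1, U.2.2, hU.le⟩
  have hG0add : ∀ A B : Set ℂ, G0 (A ∪ B) ≤ G0 A + G0 B := by
    intro A B
    refine ENNReal.le_of_forall_pos_le_add fun ε hε _ => ?_
    have hε2 : ((ε : ℝ≥0∞) / 2) ≠ 0 := by
      simp [ENNReal.div_eq_zero_iff, hε.ne']
    obtain ⟨U, hUo, hAU, hU⟩ := hG0key A _ hε2
    obtain ⟨V, hVo, hBV, hV⟩ := hG0key B _ hε2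
    calc G0 (A ∪ B) ≤ F (U ∪ V) := hG0le _ _ (hUo.union hVo) (union_subset_union hAU hBV)
      _ ≤ F U + F V := hFadd U V
      _ ≤ (G0 A + (ε : ℝ≥0∞) / 2) + (G0 B + (ε : ℝ≥0∞) / 2) := add_le_add hU hV
      _ = G0 A + G0 B + (ε : ℝ≥0∞) := by
          rw [add_add_add_comm, ENNReal.add_halves]
  have hG0union : ∀ A B : Set ℂ, IsCompact A → IsCompact B → Disjoint A B →
      G0 A + G0 B ≤ G0 (A ∪ B) := by
    intro A B hA hB hd
    obtain ⟨U, V, hUo, hVo, hAU, hBV, hUV⟩ :=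
      SeparatedNhds.of_isCompact_isCompact_isClosed hA hB hB.isClosed hd
    refine le_iInf fun W => ?_
    have hWA : A ⊆ W.1 := (subset_union_left).trans W.2.2
    have hWB : B ⊆ W.1 := (subset_union_right).trans W.2.2
    calc G0 A + G0 B ≤ F (W.1 ∩ U) + F (W.1 ∩ V) :=
          add_le_add (hG0le _ _ (W.2.1.inter hUo) (subset_inter hWA hAU))
            (hG0le _ _ (W.2.1.inter hVo) (subset_inter hWB hBV))
      _ ≤ F ((W.1 ∩ U) ∪ (W.1 ∩ V)) :=
          hFsuper _ _ (W.2.1.inter hVo).measurableSet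
            (hUV.mono inter_subset_right inter_subset_right)
      _ ≤ F W.1 := hFmono _ _ (union_subset inter_subset_left inter_subset_left)
  -- build the content and its measure
  set Λ : Content ℂ :=
    { toFun := fun C => (G0 C.1).toNNReal
      mono' := fun C D h => ENNReal.toNNReal_mono (hG0t _) (hG0mono _ _ h)
      sup_disjoint' := by
        intro C D hdis _ _
        have h1 : G0 (C.1 ∪ D.1) = G0 C.1 + G0 D.1 :=
          le_antisymm (hG0add _ _) (hG0union C.1 D.1 C.2 D.2 hdis)
        have h3 : (G0 (C.1 ∪ D.1)).toNNReal = (G0 C.1).toNNReal + (G0 D.1).toNNReal := by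
          rw [h1]
          exact ENNReal.toNNReal_add (hG0t _) (hG0t _)
        exact h3
      sup_le' := by
        intro C D
        have h1 : G0 (C.1 ∪ D.1) ≤ G0 C.1 + G0 D.1 := hG0add _ _
        have h3 := ENNReal.toNNReal_mono (ENNReal.add_ne_top.mpr ⟨hG0t _, hG0t _⟩) h1
        rw [ENNReal.toNNReal_add (hG0t _) (hG0t _)] at h3
        exact h3 } with hΛ
  have hΛcoe : ∀ C : TopologicalSpace.Compacts ℂ, (Λ C : ℝ≥0∞) = G0 C.1 := fun C =>
    ENNReal.coe_toNNReal (hG0t _)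
  -- the limit measure dominates below F on opens
  have hmopen : ∀ U : Set ℂ, IsOpen U → Λ.measure U ≤ F U := by
    intro U hU
    rw [Λ.measure_apply hU.measurableSet, Λ.outerMeasure_of_isOpen U hU]
    refine iSup₂_le fun C hC => ?_
    rw [hΛcoe]
    exact hG0le C.1 U hU hC
  have hmuniv : Λ.measure Set.univ = r' := by
    refine le_antisymm ((hmopen Set.univ isOpen_univ).trans hFuniv.le) ?_
    rw [Λ.measure_apply MeasurableSet.univ, Λ.outerMeasure_of_isOpen Set.univ isOpen_univ]
    have h1 := Λ.le_innerContent ⟨K 0, hcpt 0⟩ ⟨Set.univ, isOpen_univ⟩ (subset_univ _)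
    calc r' = (Λ ⟨K 0, hcpt 0⟩ : ℝ≥0∞) := by rw [hΛcoe]; exact hG0K0.symm
      _ ≤ _ := h1
  haveI hfinm : IsFiniteMeasure Λ.measure := ⟨by rw [hmuniv]; exact hr't.lt_top⟩
  have hKinfclosed : IsClosed Kinf := isClosed_iInter fun n => (hcpt n).isClosed
  have hmKc : Λ.measure (Kinfᶜ) = 0 := by
    have hopen : IsOpen (Kinfᶜ) := hKinfclosed.isOpen_compl
    rw [Λ.measure_apply hopen.measurableSet, Λ.outerMeasure_of_isOpen _ hopen]
    refine le_antisymm (iSup₂_le fun C hC => ?_) zero_le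
    have hcov : C.1 ⊆ ⋃ n, (K n)ᶜ := by
      intro x hx
      have h5 : x ∉ Kinf := hC hx
      simp only [hKinf, mem_iInter, not_forall] at h5
      obtain ⟨n, hn⟩ := h5
      exact mem_iUnion.mpr ⟨n, hn⟩
    have hdir : Directed (· ⊆ ·) (fun n => (K n)ᶜ) := fun m n =>
      ⟨max m n, compl_subset_compl.mpr (hKanti (le_max_left m n)),
        compl_subset_compl.mpr (hKanti (le_max_right m n))⟩
    obtain ⟨N, hN⟩ := C.2.elim_directed_cover _ (fun n => (hcpt n).isClosed.isOpen_compl) hcov hdir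
    rw [hΛcoe, hG0zero C.1 ⟨N, hN⟩]
  have hmK : Λ.measure Kinf = r' := by
    have h1 := measure_add_measure_compl (μ := Λ.measure) hKinfclosed.measurableSet
    rw [hmKc, add_zero] at h1
    rw [h1, hmuniv]
  -- the potential bound for the limit measure
  have hK0ne : (K 0).Nonempty := by
    rw [Set.nonempty_iff_ne_empty]
    intro h
    have h2 := hmass 0
    rw [h, measure_empty] at h2
    exact absurd h2 (by simp)
  have hpotm : ∀ z ∈ puncDisk, hPotential Λ.measure z ≤ ENNReal.ofReal (hker z) := by
    intro z hz
    obtain ⟨L, hLc, hK0L, hLsub⟩ := exists_compact_between (hcpt 0) isOpen_puncDisk (hsub 0)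
    obtain ⟨φ, hφ0, hφ1, hφ01⟩ := exists_continuous_zero_one_of_isClosed
      isOpen_interior.isClosed_compl (hcpt 0).isClosed
      (disjoint_compl_left.mono_right hK0L)
    set mfun : ℂ → ℝ≥0∞ := fun w => ENNReal.ofReal (φ w) / ENNReal.ofReal (hker w) with hmfun
    have hLne : L.Nonempty := hK0ne.mono (hK0L.trans interior_subset)
    have hkerContOn : ContinuousOn hker L := fun w hw =>
      (hker_contAt (by simpa using (hLsub hw).2)).continuousWithinAt
    obtain ⟨w₀, hw₀L, hw₀min⟩ := hLc.exists_isMinOn hLne hkerContOn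
    have hδpos : 0 < hker w₀ := hker_pos (hLsub hw₀L)
    have hδle : ∀ w ∈ L, hker w₀ ≤ hker w := fun w hw => hw₀min hw
    have hm_le : ∀ w, mfun w ≤ (ENNReal.ofReal (hker w))⁻¹ := by
      intro w
      rw [hmfun, ← one_div]
      exact ENNReal.div_le_div (ENNReal.ofReal_le_one.mpr (hφ01 w).2) le_rfl
    have hm_bd : ∀ w, mfun w ≤ (ENNReal.ofReal (hker w₀))⁻¹ := by
      intro w
      by_cases hw : w ∈ interior L
      · rw [hmfun, ← one_div]
        exact ENNReal.div_le_div (ENNReal.ofReal_le_one.mpr (hφ01 w).2)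
          (ENNReal.ofReal_le_ofReal (hδle w (interior_subset hw)))
      · have h0 : φ w = 0 := hφ0 hw
        rw [hmfun]
        simp [h0]
    have hm_K0 : ∀ w ∈ K 0, mfun w = (ENNReal.ofReal (hker w))⁻¹ := by
      intro w hw
      have h1 : φ w = 1 := hφ1 hw
      rw [hmfun]
      simp [h1, one_div]
    have hδinvt : (ENNReal.ofReal (hker w₀))⁻¹ ≠ ⊤ :=
      ENNReal.inv_ne_top.mpr (ENNReal.ofReal_pos.mpr hδpos).ne'
    have hgk : ∀ k : ℕ, ∫⁻ w, min (greenFn z w) (k : ℝ≥0∞) * mfun w ∂Λ.measure ≤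
        ENNReal.ofReal (hker z) := by
      intro k
      refine keyP hev hmopen (g_cont hLc hLsub hφ0 hφ01 hz k)
        (B := (k : ℝ≥0∞) * (ENNReal.ofReal (hker w₀))⁻¹) ?_ ?_ hν_univ hr't ?_
        ENNReal.ofReal_ne_top
      · intro w
        exact mul_le_mul' (min_le_right _ _) (hm_bd w)
      · exact ENNReal.mul_ne_top (ENNReal.natCast_ne_top k) hδinvt
      · intro n
        refine le_trans (lintegral_mono fun w => ?_) (hν_pot n z hz)
        calc min (greenFn z w) (k : ℝ≥0∞) * mfun w
            ≤ greenFn z w * (ENNReal.ofReal (hker w))⁻¹ :=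
              mul_le_mul' (min_le_left _ _) (hm_le w)
          _ = greenFn z w / ENNReal.ofReal (hker w) := (div_eq_mul_inv _ _).symm
    have hmono : Monotone fun (k : ℕ) => fun (w : ℂ) =>
        min (greenFn z w) (k : ℝ≥0∞) * mfun w := by
      intro k l hkl
      intro w
      exact mul_le_mul_left (min_le_min le_rfl (Nat.cast_le.mpr hkl)) _
    have hmeas : ∀ k : ℕ, Measurable fun w => min (greenFn z w) (k : ℝ≥0∞) * mfun w :=
      fun k => (g_cont hLc hLsub hφ0 hφ01 hz k).measurable
    have hMCT := lintegral_iSup hmeas hmono (μ := Λ.measure)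
    have hsup : ∀ w, (⨆ k : ℕ, min (greenFn z w) (k : ℝ≥0∞) * mfun w) =
        greenFn z w * mfun w := by
      intro w
      rw [← ENNReal.iSup_mul, sup_min_nat]
    have hK0c : Λ.measure ((K 0)ᶜ) = 0 :=
      measure_mono_null (compl_subset_compl.mpr (iInter_subset K 0)) hmKc
    have hae : (fun w => greenFn z w * mfun w) =ᵐ[Λ.measure]
        fun w => greenFn z w / ENNReal.ofReal (hker w) := by
      have heq : ∀ w ∈ K 0, greenFn z w * mfun w = greenFn z w / ENNReal.ofReal (hker w) := by
        intro w hw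
        rw [hm_K0 w hw, div_eq_mul_inv]
      rw [Filter.EventuallyEq, ae_iff]
      refine measure_mono_null ?_ hK0c
      intro w hw
      exact fun hmem => hw (heq w hmem)
    calc hPotential Λ.measure z
        = ∫⁻ w, greenFn z w * mfun w ∂Λ.measure := (lintegral_congr_ae hae).symm
      _ = ⨆ k : ℕ, ∫⁻ w, min (greenFn z w) (k : ℝ≥0∞) * mfun w ∂Λ.measure := by
          rw [← hMCT]
          exact lintegral_congr fun w => (hsup w).symm
      _ ≤ ENNReal.ofReal (hker z) := iSup_le hgk
  exact le_sSup ⟨Λ.measure, hfinm, hmKc, hpotm, hmK.symm⟩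

/-- Lemma 2.2(2) for the Laplacian: the `h`-capacity is continuous along monotone sequences of
compact subsets of `D` with compact limit. -/
theorem capH_continuous_along_monotone_sequences :
    (∀ K : ℕ → Set ℂ, (∀ n, IsCompact (K n)) → (∀ n, K n ⊆ puncDisk) →
      (∀ n, K (n + 1) ⊆ K n) →
      Tendsto (fun n => capH (K n)) atTop (𝓝 (capH (⋂ n, K n)))) ∧
    (∀ K : ℕ → Set ℂ, (∀ n, IsCompact (K n)) → (∀ n, K n ⊆ K (n + 1)) →
      IsCompact (⋃ n, K n) → (⋃ n, K n) ⊆ puncDisk →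
      Tendsto (fun n => capH (K n)) atTop (𝓝 (capH (⋃ n, K n)))) := by
  constructor
  · intro K hcpt hsub hdec
    have hanti : Antitone fun n => capH (K n) :=
      antitone_nat_of_succ_le fun n => capH_mono (hdec n)
    have heq : capH (⋂ n, K n) = ⨅ n, capH (K n) :=
      le_antisymm (le_iInf fun n => capH_mono (iInter_subset K n))
        (iInf_le_capH_iInter K hcpt hsub hdec)
    rw [heq]
    exact tendsto_atTop_iInf hanti
  · intro K hcpt hmono _ _
    have hm : Monotone fun n => capH (K n) :=
      monotone_nat_of_le_succ fun n => capH_mono (hmono n)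
    rw [capH_iUnion K hcpt hmono]
    exact tendsto_atTop_iSup hm

end
end
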